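/- arXiv:1203.3777 — 4 statements merged into one kernel-verified Lean document; each statement's English description precedes it below -/
import Mathlib

section
/- Let n ≥ 1, c > 2, ε > 0, and r ∈ ℕ. For any p ∈ W_n, setting p̃^r = p + ε·g^r_c, one has l1(p − p̃^r) = l1(ε·g^r_c) ≤ ε·c/(c−2). -/
open scoped ComplexOrder

noncomputable section

/-- The Weyl algebra `W_n`: a complex `*`-algebra generated by `a 1, …, a n` and their
adjoints, satisfying the canonical commutation relations, in which the normally ordered
monomials `(a*)^s a^t` form a basis (this pins the algebra down up to `*`-isomorphism). -/
structure WeylAlgebra (n : ℕ) where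
  carrier : Type
  [ring : Ring carrier]
  [alg : Algebra ℂ carrier]
  [starRing : StarRing carrier]
  [starModule : StarModule ℂ carrier]
  a : Fin n → carrier
  comm_aa : ∀ i j, a i * a j = a j * a i
  comm_ss : ∀ i j, star (a i) * star (a j) = star (a j) * star (a i)
  ccr : ∀ i j : Fin n, a i * star (a j) - star (a j) * a i = if i = j then 1 else 0
  basis : Module.Basis ((Fin n → ℕ) × (Fin n → ℕ)) ℂ carrier
  basis_eq : ∀ st : (Fin n → ℕ) × (Fin n → ℕ),
    basis st = (List.ofFn fun i => star (a i) ^ st.1 i).prod *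
               (List.ofFn fun i => (a i) ^ st.2 i).prod

attribute [instance] WeylAlgebra.ring WeylAlgebra.alg WeylAlgebra.starRing
  WeylAlgebra.starModule

namespace WeylAlgebra

variable {n : ℕ} (W : WeylAlgebra n)

/-- The monomial `a^t = ∏ i, (a i)^(t i)`. -/
def amon (t : Fin n → ℕ) : W.carrier := (List.ofFn fun i => W.a i ^ t i).prod

/-- The normally ordered monomial `(a*)^s a^t`. -/
def nmon (s t : Fin n → ℕ) : W.carrier :=
  (List.ofFn fun i => star (W.a i) ^ s i).prod * (List.ofFn fun i => W.a i ^ t i).prod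

/-- The `l₁`-norm of the coefficients of the (unique) normal form of `p`. -/
def l1 (p : W.carrier) : ℝ := (W.basis.repr p).sum fun _ c => ‖c‖

/-- The degree of `p`: the maximal `‖s‖₁ + ‖t‖₁` over monomials appearing in the normal
form of `p`. -/
def deg (p : W.carrier) : ℕ :=
  (W.basis.repr p).support.sup fun st => (∑ i, st.1 i) + (∑ i, st.2 i)

/-- `p` is a sum of squares, i.e. `p ∈ Σ²`. -/
def IsSOS (p : W.carrier) : Prop :=
  ∃ (N : ℕ) (f : Fin N → W.carrier), p = ∑ i, star (f i) * f i

/-- `p ∈ Σ²_k`: `p` is a sum of squares of elements of degree at most `k`. -/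
def IsSOSdeg (k : ℕ) (p : W.carrier) : Prop :=
  ∃ (N : ℕ) (f : Fin N → W.carrier), (∀ i, W.deg (f i) ≤ k) ∧ p = ∑ i, star (f i) * f i

/-- The element `g^r_c = ∑_{‖t‖₁ ≤ r} (n-1)!/(c^{‖t‖₁} (n+‖t‖₁-1)!) • a^t (a^t)*`. -/
def gpoly (c : ℝ) (r : ℕ) : W.carrier :=
  ∑ t ∈ (Fintype.piFinset fun _ : Fin n => Finset.range (r + 1)).filter
      (fun t => ∑ i, t i ≤ r),
    ((Nat.factorial (n - 1) : ℂ) /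
        ((c : ℂ) ^ (∑ i, t i) * (Nat.factorial (n + (∑ i, t i) - 1) : ℂ))) •
      (W.amon t * star (W.amon t))

/-- The value in `W` of a single letter (`Sum.inl i ↦ a i`, `Sum.inr i ↦ (a i)*`). -/
def letterVal : Fin n ⊕ Fin n → W.carrier
  | Sum.inl i => W.a i
  | Sum.inr i => star (W.a i)

/-- The value in `W` of a word (monomial) in the letters `a_1,…,a_n,a_1*,…,a_n*`. -/
def wordVal (w : List (Fin n ⊕ Fin n)) : W.carrier := (w.map W.letterVal).prod

end WeylAlgebra

/-- The domain of the Schrödinger representation: finitely supported functions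
`ℕ^n → ℂ`. -/
abbrev DSpace (n : ℕ) := (Fin n → ℕ) →₀ ℂ

/-- The number basis vector `e_m`. -/
def eVec {n : ℕ} (m : Fin n → ℕ) : DSpace n := Finsupp.single m 1

/-- The inner product `⟨f, g⟩ = ∑_m conj (f m) * g m` on `DSpace n`
(antilinear in the first argument). -/
def innerD {n : ℕ} (f g : DSpace n) : ℂ := f.sum fun m c => (starRingEnd ℂ) c * g m

/-- The Schrödinger (Fock) representation of the Weyl algebra `W` on `DSpace n`,
specified by its action on the number basis. -/
structure Schrodinger {n : ℕ} (W : WeylAlgebra n) where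
  rep : W.carrier →ₐ[ℂ] Module.End ℂ (DSpace n)
  rep_a : ∀ (i : Fin n) (m : Fin n → ℕ),
    rep (W.a i) (eVec m) =
      (Real.sqrt (m i) : ℂ) • eVec (Function.update m i (m i - 1))
  rep_astar : ∀ (i : Fin n) (m : Fin n → ℕ),
    rep (star (W.a i)) (eVec m) =
      (Real.sqrt (m i + 1) : ℂ) • eVec (Function.update m i (m i + 1))

namespace Schrodinger

variable {n : ℕ} {W : WeylAlgebra n} (S : Schrodinger W)

/-- `π(p) ≥ 0`: the quadratic form of `π(p)` is nonnegative on the domain. -/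
def PiNonneg (p : W.carrier) : Prop := ∀ φ : DSpace n, 0 ≤ innerD φ (S.rep p φ)

/-- The set of energies `⟨φ, π(p) φ⟩` over normalized `φ` in the domain. -/
def energySet (p : W.carrier) : Set ℝ :=
  { x | ∃ φ : DSpace n, innerD φ φ = 1 ∧ (innerD φ (S.rep p φ)).re = x }

/-- `λ_inf(p)`, the infimum of `⟨φ, π(p) φ⟩` over normalized `φ`. -/
def lambdaInf (p : W.carrier) : ℝ := sInf (S.energySet p)

end Schrodinger

set_option maxHeartbeats 1000000

/-- Coefficients in the normal ordering of `a^k (a*)^k`. -/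
def wc (k j : ℕ) : ℕ := (k.choose j)^2 * (k - j).factorial

lemma wc_rec_q (k j : ℕ) :
    (wc (k+1) j : ℚ) = (if j = 0 then 0 else (wc k (j-1) : ℚ))
      + (2*(j:ℚ)+1) * (wc k j : ℚ) + ((j:ℚ)+1)^2 * (wc k (j+1) : ℚ) := by
  rcases j with _ | j
  · simp only [if_pos rfl, Nat.cast_zero, zero_add]
    rcases k with _ | k
    · norm_num [wc]
    · have h0 : wc (k+1+1) 0 = (k+2).factorial := by simp [wc]
      have h1 : wc (k+1) 0 = (k+1).factorial := by simp [wc]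
      have h2 : wc (k+1) 1 = (k+1)^2 * k.factorial := by
        simp [wc, Nat.choose_one_right]
      rw [h0, h1, h2]
      have e : (k+2).factorial = (k+1).factorial + (k+1)^2 * k.factorial := by
        simp [Nat.factorial_succ]; ring
      rw [e]; push_cast; ring
  · rw [if_neg (Nat.succ_ne_zero j)]
    rcases lt_or_ge k j with hk | hk
    · -- k < j : everything vanishes
      have z1 : (k+1).choose (j+1) = 0 := Nat.choose_eq_zero_of_lt (by omega)
      have z2 : k.choose j = 0 := Nat.choose_eq_zero_of_lt (by omega)
      have z3 : k.choose (j+1) = 0 := Nat.choose_eq_zero_of_lt (by omega)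
      have z4 : k.choose (j+1+1) = 0 := Nat.choose_eq_zero_of_lt (by omega)
      simp [wc, z1, z2, z3, z4]
    · rcases Nat.exists_eq_add_of_le hk with ⟨m, rfl⟩
      rcases m with _ | m
      · -- k = j
        simp only [Nat.add_zero, Nat.succ_sub_one]
        have z3 : j.choose (j+1) = 0 := Nat.choose_eq_zero_of_lt (by omega)
        have z4 : j.choose (j+1+1) = 0 := Nat.choose_eq_zero_of_lt (by omega)
        simp [wc, z3, z4, Nat.choose_self]
      · rcases m with _ | m
        · -- k = j+1
          simp only [Nat.succ_sub_one]
          have z4 : (j+1).choose (j+1+1) = 0 := Nat.choose_eq_zero_of_lt (by omega)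
          have c1 : (j+1+1).choose (j+1) = j+2 := Nat.choose_succ_self_right _
          have c2 : (j+1).choose j = j+1 := Nat.choose_succ_self_right _
          have s1 : j + 1 + 1 - (j+1) = 1 := by omega
          have s2 : j + 1 - j = 1 := by omega
          simp [wc, z4, c1, c2, Nat.choose_self, s1, s2]
          ring
        · -- generic : k = j + 2 + m
          set q : ℕ := j + (m+1+1) with hq
          have hq1 : j + 1 ≤ q := by omega
          have hq2 : j ≤ q := by omega
          have hq3 : j + 2 ≤ q := by omega
          have hj1 : j + 1 ≤ q + 1 := by omega
          have e1 : ((q+1).choose (j+1) : ℚ)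
              = (q+1).factorial / ((j+1).factorial * (m+2).factorial) := by
            have s : q + 1 - (j+1) = m+2 := by omega
            rw [Nat.cast_choose ℚ hj1, s]
          have e2 : (q.choose j : ℚ)
              = q.factorial / (j.factorial * (m+2).factorial) := by
            have s : q - j = m+2 := by omega
            rw [Nat.cast_choose ℚ hq2, s]
          have e3 : (q.choose (j+1) : ℚ)
              = q.factorial / ((j+1).factorial * (m+1).factorial) := by
            have s : q - (j+1) = m+1 := by omega
            rw [Nat.cast_choose ℚ hq1, s]
          have e4 : (q.choose (j+1+1) : ℚ)
              = q.factorial / ((j+2).factorial * m.factorial) := by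
            have s : q - (j+1+1) = m := by omega
            rw [Nat.cast_choose ℚ hq3, s]
          have s1 : q + 1 - (j + 1) = m + 2 := by omega
          have s2 : q - j = m + 2 := by omega
          have s3 : q - (j+1) = m + 1 := by omega
          have s4 : q - (j+1+1) = m := by omega
          simp only [wc, s1, s2, s3, s4]
          push_cast [e1, e2, e3, e4]
          have f1 : ((q+1).factorial : ℚ) = (q+1) * q.factorial := by
            push_cast [Nat.factorial_succ]; ring
          have f2 : ((j+1).factorial : ℚ) = (j+1) * j.factorial := by
            push_cast [Nat.factorial_succ]; ring
          have f3 : ((j+2).factorial : ℚ) = (j+2) * ((j+1) * j.factorial) := by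
            push_cast [Nat.factorial_succ]; ring
          have f4 : ((m+2).factorial : ℚ) = (m+2) * ((m+1) * m.factorial) := by
            push_cast [Nat.factorial_succ]; ring
          have f5 : ((m+1).factorial : ℚ) = (m+1) * m.factorial := by
            push_cast [Nat.factorial_succ]; ring
          have hqq : (q : ℚ) + 1 = (j : ℚ) + m + 3 := by push_cast [hq]; ring
          rw [show ((q - j).factorial : ℚ) = ((m+2).factorial : ℚ) by rw [s2]]
          rw [f1, f2, f3, f4, f5, hqq]
          have hjf : (j.factorial : ℚ) ≠ 0 := by positivity
          have hmf : (m.factorial : ℚ) ≠ 0 := by positivity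
          have hqf : (q.factorial : ℚ) ≠ 0 := by positivity
          generalize (j.factorial : ℚ) = J at hjf ⊢
          generalize (m.factorial : ℚ) = M at hmf ⊢
          generalize (q.factorial : ℚ) = F at hqf ⊢
          field_simp
          ring
lemma wc_rec (k j : ℕ) :
    wc (k+1) j = (if j = 0 then 0 else wc k (j-1))
      + (2*j+1) * wc k j + (j+1)^2 * wc k (j+1) := by
  have h := wc_rec_q k j
  rcases j with _ | j
  · simp only [if_pos rfl] at h ⊢; exact_mod_cast h
  · rw [if_neg (Nat.succ_ne_zero j)] at h ⊢; exact_mod_cast h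

lemma wc_zero (k : ℕ) : wc k 0 = k.factorial := by simp [wc]
lemma wc_top (k j : ℕ) (h : k < j) : wc k j = 0 := by
  simp [wc, Nat.choose_eq_zero_of_lt h]

lemma wc_sum_le (k : ℕ) : ∑ j ∈ Finset.range (k+1), wc k j ≤ 2^k * k.factorial := by
  calc ∑ j ∈ Finset.range (k+1), wc k j
      ≤ ∑ j ∈ Finset.range (k+1), k.choose j * k.factorial := by
        apply Finset.sum_le_sum
        intro j hj
        rw [Finset.mem_range] at hj
        have hle : j ≤ k := by omega
        have h1 : k.choose j * (k - j).factorial ≤ k.factorial := by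
          have := Nat.choose_mul_factorial_mul_factorial hle
          calc k.choose j * (k - j).factorial
              ≤ k.choose j * (k-j).factorial * j.factorial :=
                Nat.le_mul_of_pos_right _ (Nat.factorial_pos j)
            _ = k.factorial := by rw [← this]; ring
        calc (k.choose j)^2 * (k-j).factorial
            = k.choose j * (k.choose j * (k-j).factorial) := by ring
          _ ≤ k.choose j * k.factorial := Nat.mul_le_mul_left _ h1
    _ = 2^k * k.factorial := by rw [← Finset.sum_mul, Nat.sum_range_choose]

namespace WeylAlgebra

variable {n : ℕ} (W : WeylAlgebra n)

lemma ccr_self (i : Fin n) : W.a i * star (W.a i) = star (W.a i) * W.a i + 1 := by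
  have h := W.ccr i i
  rw [if_pos rfl] at h
  rw [sub_eq_iff_eq_add.mp h, add_comm]

lemma commute_a_star (i j : Fin n) (h : i ≠ j) : Commute (W.a i) (star (W.a j)) := by
  have hc := W.ccr i j
  rw [if_neg h] at hc
  exact sub_eq_zero.mp hc

lemma a_mul_spow (i : Fin n) (m : ℕ) :
    W.a i * star (W.a i) ^ m
      = star (W.a i) ^ m * W.a i + (m : ℂ) • star (W.a i) ^ (m - 1) := by
  induction m with
  | zero => simp
  | succ m ih =>
    have h1 : W.a i * star (W.a i) ^ (m + 1)
        = (W.a i * star (W.a i) ^ m) * star (W.a i) := by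
      rw [pow_succ, mul_assoc]
    rw [h1, ih, add_mul, smul_mul_assoc]
    rcases Nat.eq_zero_or_pos m with hm | hm
    · subst hm; simp [ccr_self, pow_succ]
    · have h2 : star (W.a i) ^ (m - 1) * star (W.a i) = star (W.a i) ^ m := by
        rw [← pow_succ, Nat.sub_add_cancel hm]
      rw [mul_assoc, ccr_self, h2, mul_add, mul_one, ← mul_assoc, ← pow_succ,
        Nat.add_sub_cancel]
      push_cast
      rw [add_smul, one_smul, add_assoc, add_comm (star (W.a i) ^ m)]

lemma apow_mul_s (i : Fin n) (m : ℕ) :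
    W.a i ^ m * star (W.a i)
      = star (W.a i) * W.a i ^ m + (m : ℂ) • W.a i ^ (m - 1) := by
  induction m with
  | zero => simp
  | succ m ih =>
    have h1 : W.a i ^ (m + 1) * star (W.a i)
        = W.a i * (W.a i ^ m * star (W.a i)) := by
      rw [pow_succ', mul_assoc]
    rw [h1, ih, mul_add, mul_smul_comm, Nat.add_sub_cancel]
    rcases Nat.eq_zero_or_pos m with hm | hm
    · subst hm; simp [ccr_self]
    · have h2 : W.a i * W.a i ^ (m - 1) = W.a i ^ m := by
        rw [← pow_succ', Nat.sub_add_cancel hm]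
      rw [h2, ← mul_assoc, ccr_self, add_mul, one_mul, mul_assoc, ← pow_succ']
      push_cast
      rw [add_smul, one_smul, add_assoc, add_comm (W.a i ^ m)]

end WeylAlgebra

namespace WeylAlgebra

variable {n : ℕ} {W : WeylAlgebra n}

lemma conj_nj (i : Fin n) (j : ℕ) :
    W.a i * (star (W.a i) ^ j * W.a i ^ j) * star (W.a i)
      = star (W.a i)^(j+1) * W.a i^(j+1)
        + ((2*j+1 : ℕ) : ℂ) • (star (W.a i)^j * W.a i^j)
        + ((j^2 : ℕ) : ℂ) • (star (W.a i)^(j-1) * W.a i^(j-1)) := by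
  rcases j with _ | j
  · simpa using W.ccr_self i
  · set A := W.a i
    set S := star (W.a i)
    have e1 : A * S^(j+1) = S^(j+1) * A + ((j+1 :ℕ):ℂ) • S^j := by
      simpa using W.a_mul_spow i (j+1)
    have e3 : A^(j+1) * S = S * A^(j+1) + ((j+1:ℕ):ℂ) • A^j := by
      simpa using W.apow_mul_s i (j+1)
    have h0 : A * (S^(j+1) * A^(j+1)) * S = (A * S^(j+1)) * (A^(j+1) * S) := by
      rw [← mul_assoc, mul_assoc]
    rw [h0, e1, e3]
    have hAS : A * S = S * A + 1 := W.ccr_self i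
    simp only [add_mul, mul_add, smul_mul_assoc, mul_smul_comm, smul_smul,
      smul_add, Nat.add_sub_cancel]
    have k1 : S ^ (j+1) * A * (S * A^(j+1)) = S^(j+2) * A^(j+2) + S^(j+1) * A^(j+1) := by
      calc S ^ (j+1) * A * (S * A^(j+1)) = S^(j+1) * (A * S) * A^(j+1) := by
            rw [mul_assoc, mul_assoc, ← mul_assoc A, mul_assoc]
        _ = S^(j+1) * (S * A + 1) * A^(j+1) := by rw [hAS]
        _ = S^(j+2) * A^(j+2) + S^(j+1) * A^(j+1) := by
            rw [mul_add, mul_one, add_mul, ← mul_assoc, ← pow_succ]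
            rw [mul_assoc, ← pow_succ']
    have k2 : S ^ (j+1) * A * A^j = S^(j+1) * A^(j+1) := by
      rw [mul_assoc, ← pow_succ']
    have k3 : S ^ j * (S * A^(j+1)) = S^(j+1) * A^(j+1) := by
      rw [← mul_assoc, ← pow_succ]
    rw [k1, k2, k3]
    push_cast
    ring_nf
    module

lemma apow_mul_spow (i : Fin n) (k : ℕ) :
    W.a i ^ k * star (W.a i) ^ k
      = ∑ j ∈ Finset.range (k+1),
          (wc k j : ℂ) • (star (W.a i) ^ j * W.a i ^ j) := by
  induction k with
  | zero => simp [wc]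
  | succ k ih =>
    set A := W.a i with hA
    set S := star (W.a i) with hS
    have h1 : A^(k+1) * S^(k+1) = A * (A^k * S^k) * S := by
      rw [pow_succ', pow_succ]; noncomm_ring
    rw [h1, ih, Finset.mul_sum, Finset.sum_mul]
    simp only [mul_smul_comm, smul_mul_assoc]
    have h2 : ∀ j ∈ Finset.range (k+1),
        (wc k j : ℂ) • (A * (S ^ j * A ^ j) * S)
          = (wc k j : ℂ) • (S^(j+1) * A^(j+1))
            + ((wc k j * (2*j+1) : ℕ) : ℂ) • (S^j * A^j)
            + ((wc k j * j^2 : ℕ) : ℂ) • (S^(j-1) * A^(j-1)) := by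
      intro j _
      rw [conj_nj i j, smul_add, smul_add, smul_smul, smul_smul]
      push_cast
      ring_nf
      rfl
    rw [Finset.sum_congr rfl h2]
    simp only [Finset.sum_add_distrib]
    have S1 : ∑ j ∈ Finset.range (k+1), (wc k j : ℂ) • (S^(j+1) * A^(j+1))
        = ∑ j ∈ Finset.range (k+2),
            (if j = 0 then (0:ℂ) else (wc k (j-1) : ℂ)) • (S^j * A^j) := by
      rw [Finset.sum_range_succ' _ (k+1)]
      simp
    have S2 : ∑ j ∈ Finset.range (k+1), ((wc k j * (2*j+1) : ℕ) : ℂ) • (S^j * A^j)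
        = ∑ j ∈ Finset.range (k+2), ((wc k j * (2*j+1) : ℕ) : ℂ) • (S^j * A^j) := by
      rw [Finset.sum_range_succ _ (k+1), wc_top k (k+1) (by omega)]
      simp
    have S3 : ∑ j ∈ Finset.range (k+1), ((wc k j * j^2 : ℕ) : ℂ) • (S^(j-1) * A^(j-1))
        = ∑ j ∈ Finset.range (k+2), (((j+1)^2 * wc k (j+1) : ℕ) : ℂ) • (S^j * A^j) := by
      rw [Finset.sum_range_succ' _ k, Finset.sum_range_succ _ (k+1),
        Finset.sum_range_succ _ k, wc_top k (k+1) (by omega), wc_top k (k+2) (by omega)]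
      simp only [Nat.add_sub_cancel, Nat.mul_comm, Nat.cast_mul, Nat.pow_zero,
        Nat.mul_zero, Nat.zero_mul, Nat.cast_zero, zero_smul, add_zero, Nat.cast_pow]
      simp [Nat.mul_comm]
    rw [S1, S2, S3, ← Finset.sum_add_distrib, ← Finset.sum_add_distrib]
    apply Finset.sum_congr rfl
    intro j _
    rw [← add_smul, ← add_smul]
    congr 1
    have := wc_rec k j
    have hc : (wc (k+1) j : ℂ)
        = (if j = 0 then 0 else (wc k (j-1) : ℂ)) + (wc k j * (2*j+1) : ℕ)
          + ((j+1)^2 * wc k (j+1) : ℕ) := by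
      rcases j with _ | j
      · simp only [if_pos rfl] at this ⊢
        rw [this]; push_cast; ring
      · rw [if_neg (Nat.succ_ne_zero j)] at this ⊢
        rw [this]; push_cast; ring
    rw [hc]

end WeylAlgebra


section ListLemmas

variable {M : Type*} [Monoid M]

lemma ofFn_prod_commute {m : ℕ} (x : Fin m → M) (y : M)
    (h : ∀ i, Commute y (x i)) : Commute y (List.ofFn x).prod := by
  apply Commute.list_prod_right
  intro z hz
  rw [List.mem_ofFn] at hz
  obtain ⟨i, rfl⟩ := hz
  exact h i

lemma ofFn_prod_mul_ofFn_prod : ∀ {m : ℕ} (x y : Fin m → M),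
    (∀ i j : Fin m, j < i → Commute (x i) (y j)) →
    (List.ofFn x).prod * (List.ofFn y).prod = (List.ofFn fun i => x i * y i).prod := by
  intro m
  induction m with
  | zero => intro x y _; simp
  | succ m ih =>
    intro x y h
    rw [List.ofFn_succ, List.ofFn_succ, List.ofFn_succ, List.prod_cons, List.prod_cons,
      List.prod_cons]
    have hcomm : Commute (y 0) (List.ofFn fun i : Fin m => x i.succ).prod := by
      apply ofFn_prod_commute
      intro i
      exact (h i.succ 0 (Fin.succ_pos i)).symm
    calc x 0 * (List.ofFn fun i : Fin m => x i.succ).prod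
          * (y 0 * (List.ofFn fun i : Fin m => y i.succ).prod)
        = x 0 * ((List.ofFn fun i : Fin m => x i.succ).prod * y 0)
          * (List.ofFn fun i : Fin m => y i.succ).prod := by
          rw [mul_assoc, mul_assoc, mul_assoc]
      _ = x 0 * (y 0 * (List.ofFn fun i : Fin m => x i.succ).prod)
          * (List.ofFn fun i : Fin m => y i.succ).prod := by rw [hcomm.eq]
      _ = (x 0 * y 0) * ((List.ofFn fun i : Fin m => x i.succ).prod
          * (List.ofFn fun i : Fin m => y i.succ).prod) := by
          rw [mul_assoc, mul_assoc, mul_assoc]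
      _ = (x 0 * y 0) * (List.ofFn fun i : Fin m => x i.succ * y i.succ).prod := by
          rw [ih _ _ fun i j hij => h i.succ j.succ (Fin.succ_lt_succ_iff.mpr hij)]

end ListLemmas

section StarList

variable {R : Type*} [Ring R] [StarRing R]

lemma star_ofFn_prod : ∀ {m : ℕ} (x : Fin m → R),
    (∀ i j : Fin m, Commute (star (x i)) (star (x j))) →
    star (List.ofFn x).prod = (List.ofFn fun i => star (x i)).prod := by
  intro m
  induction m with
  | zero => intro x _; simp
  | succ m ih =>
    intro x h
    rw [List.ofFn_succ, List.ofFn_succ, List.prod_cons, List.prod_cons, star_mul,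
      ih _ fun i j => h i.succ j.succ]
    exact (ofFn_prod_commute _ _ fun i => h 0 i.succ).eq.symm

end StarList

section SumExpand

variable {R : Type*} [NonAssocSemiring R] {β : Type*} [AddCommMonoid β]

lemma sum_piFinset_succ {m : ℕ} (s : Fin (m+1) → Finset ℕ)
    (F : (Fin (m+1) → ℕ) → β) :
    ∑ g ∈ Fintype.piFinset s, F g
      = ∑ j ∈ s 0, ∑ g ∈ Fintype.piFinset (fun i : Fin m => s i.succ),
          F (Fin.cons j g) := by
  rw [← Finset.sum_product']
  apply Finset.sum_nbij' (fun g => ((g 0, Fin.tail g) : ℕ × (Fin m → ℕ)))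
    (fun p => Fin.cons p.1 p.2)
  · intro g hg
    rw [Fintype.mem_piFinset] at hg
    simp only [Finset.mem_product]
    exact ⟨hg 0, by rw [Fintype.mem_piFinset]; intro i; exact hg i.succ⟩
  · intro p hp
    simp only [Finset.mem_product] at hp
    rw [Fintype.mem_piFinset]
    intro i
    refine Fin.cases ?_ ?_ i
    · simpa using hp.1
    · intro k
      simpa [Fin.cons_succ] using Fintype.mem_piFinset.mp hp.2 k
  · intro g _; exact Fin.cons_self_tail g
  · intro p _; simp [Fin.tail_cons]
  · intro g _; exact congrArg F (Fin.cons_self_tail g).symm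

lemma ofFn_prod_sum : ∀ {m : ℕ} (s : Fin m → Finset ℕ) (f : Fin m → ℕ → R),
    (List.ofFn fun i => ∑ j ∈ s i, f i j).prod
      = ∑ g ∈ Fintype.piFinset s, (List.ofFn fun i => f i (g i)).prod := by
  intro m
  induction m with
  | zero =>
    intro s f
    simp
  | succ m ih =>
    intro s f
    rw [sum_piFinset_succ]
    rw [List.ofFn_succ, List.prod_cons, Finset.sum_mul]
    apply Finset.sum_congr rfl
    intro j _
    rw [ih (fun i => s i.succ) (fun i v => f i.succ v), Finset.mul_sum]
    apply Finset.sum_congr rfl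
    intro g _
    rw [List.ofFn_succ, List.prod_cons]
    simp [Fin.tail, Fin.cons_succ]

end SumExpand

section SmulPull

variable {A : Type*} [Ring A] [Algebra ℂ A]

lemma ofFn_prod_smul : ∀ {m : ℕ} (κ : Fin m → ℂ) (z : Fin m → A),
    (List.ofFn fun i => κ i • z i).prod = (∏ i, κ i) • (List.ofFn z).prod := by
  intro m
  induction m with
  | zero => intro κ z; simp
  | succ m ih =>
    intro κ z
    rw [List.ofFn_succ, List.prod_cons, ih (fun i => κ i.succ) (fun i => z i.succ),
      List.ofFn_succ, List.prod_cons, Fin.prod_univ_succ, smul_mul_smul_comm]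

end SmulPull

namespace WeylAlgebra

variable {n : ℕ} {W : WeylAlgebra n}

lemma commute_star_star (i j : Fin n) : Commute (star (W.a i)) (star (W.a j)) :=
  W.comm_ss i j

lemma star_amon (t : Fin n → ℕ) :
    star (W.amon t) = (List.ofFn fun i => star (W.a i) ^ t i).prod := by
  unfold amon
  have h := star_ofFn_prod (fun i => W.a i ^ t i) (fun i j => by
    simp only [star_pow]
    exact (commute_star_star i j).pow_pow _ _)
  rw [h]
  simp [star_pow]

lemma amon_mul_star (t : Fin n → ℕ) :
    W.amon t * star (W.amon t)
      = (List.ofFn fun i => W.a i ^ t i * star (W.a i) ^ t i).prod := by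
  rw [star_amon]
  exact ofFn_prod_mul_ofFn_prod _ _ fun i j hij =>
    (W.commute_a_star i j (ne_of_gt hij)).pow_pow _ _

lemma nmon_diag (s : Fin n → ℕ) :
    (List.ofFn fun i => star (W.a i) ^ s i * W.a i ^ s i).prod = W.nmon s s := by
  unfold nmon
  rw [ofFn_prod_mul_ofFn_prod _ _ fun i j hij =>
    ((W.commute_a_star j i (ne_of_gt hij).symm).symm).pow_pow _ _]

lemma amon_star_expand (t : Fin n → ℕ) :
    W.amon t * star (W.amon t)
      = ∑ g ∈ Fintype.piFinset (fun i => Finset.range (t i + 1)),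
          ((∏ i, wc (t i) (g i) : ℕ) : ℂ) • W.nmon g g := by
  rw [amon_mul_star]
  have h0 : ∀ i, W.a i ^ t i * star (W.a i) ^ t i
      = ∑ j ∈ Finset.range (t i + 1),
          (wc (t i) j : ℂ) • (star (W.a i) ^ j * W.a i ^ j) :=
    fun i => W.apow_mul_spow i (t i)
  simp only [h0]
  rw [ofFn_prod_sum]
  apply Finset.sum_congr rfl
  intro g _
  rw [ofFn_prod_smul, nmon_diag]
  congr 1
  push_cast
  rfl

/-! ### `l1` seminorm lemmas -/

lemma l1_zero : W.l1 0 = 0 := by simp [l1]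

lemma l1_smul (z : ℂ) (p : W.carrier) : W.l1 (z • p) = ‖z‖ * W.l1 p := by
  rcases eq_or_ne z 0 with rfl | hz
  · simp [l1_zero]
  · unfold l1
    rw [map_smul]
    rw [Finsupp.sum, Finsupp.sum, Finsupp.support_smul_eq hz, Finset.mul_sum]
    apply Finset.sum_congr rfl
    intro x _
    rw [Finsupp.smul_apply, smul_eq_mul, norm_mul]

lemma l1_neg (p : W.carrier) : W.l1 (-p) = W.l1 p := by
  have : (-p : W.carrier) = (-1 : ℂ) • p := by simp
  rw [this, l1_smul]
  simp

lemma l1_add_le (p q : W.carrier) : W.l1 (p + q) ≤ W.l1 p + W.l1 q := by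
  unfold l1
  rw [map_add]
  set fp := W.basis.repr p
  set fq := W.basis.repr q
  have hz : ∀ i ∈ fp.support ∪ fq.support, ‖((0:ℂ))‖ = 0 := by simp
  rw [Finsupp.sum_of_support_subset (fp + fq) (Finsupp.support_add) _ fun i _ => norm_zero,
    Finsupp.sum_of_support_subset fp (Finset.subset_union_left) _ fun i _ => norm_zero,
    Finsupp.sum_of_support_subset fq (Finset.subset_union_right) _ fun i _ => norm_zero,
    ← Finset.sum_add_distrib]
  apply Finset.sum_le_sum
  intro i _
  rw [Finsupp.add_apply]
  exact norm_add_le _ _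

lemma l1_sum_le {α : Type*} (F : Finset α) (f : α → W.carrier) :
    W.l1 (∑ x ∈ F, f x) ≤ ∑ x ∈ F, W.l1 (f x) := by
  classical
  induction F using Finset.induction_on with
  | empty => simp [l1_zero]
  | insert _ _ hx ih =>
    rename_i a s
    rw [Finset.sum_insert hx, Finset.sum_insert hx]
    exact (l1_add_le _ _).trans (by linarith)

lemma l1_nmon (s t : Fin n → ℕ) : W.l1 (W.nmon s t) = 1 := by
  have h : W.nmon s t = W.basis (s, t) := by rw [W.basis_eq]; rfl
  rw [l1, h, Module.Basis.repr_self]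
  simp [Finsupp.sum_single_index]

end WeylAlgebra

/-- For `p̃^r = p + ε·g^r_c` one has
`l1(p - p̃^r) = l1(ε·g^r_c) ≤ ε·c/(c-2)`. -/
theorem l1_perturbation_bound {n : ℕ} (hn : 1 ≤ n) (c : ℝ) (hc : 2 < c)
    (ε : ℝ) (hε : 0 < ε) (r : ℕ) (W : WeylAlgebra n) (p : W.carrier) :
    W.l1 (p - (p + (ε : ℂ) • W.gpoly c r)) = W.l1 ((ε : ℂ) • W.gpoly c r) ∧
    W.l1 ((ε : ℂ) • W.gpoly c r) ≤ ε * (c / (c - 2)) := by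
  have hc0 : (0:ℝ) < c := by linarith
  constructor
  · have h : p - (p + (ε : ℂ) • W.gpoly c r) = -((ε : ℂ) • W.gpoly c r) := by abel
    rw [h, W.l1_neg]
  · rw [W.l1_smul]
    have habs : ‖((ε:ℝ) : ℂ)‖ = ε := by
      rw [Complex.norm_real, Real.norm_eq_abs, abs_of_pos hε]
    rw [habs]
    have key : W.l1 (W.gpoly c r) ≤ c / (c - 2) := by
      set T := (Fintype.piFinset fun _ : Fin n => Finset.range (r + 1)).filter
        (fun t => ∑ i, t i ≤ r) with hT
      -- step 1 : termwise bound
      have h1 : W.l1 (W.gpoly c r)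
          ≤ ∑ t ∈ T, (Nat.factorial (n-1) : ℝ) * 2 ^ (∑ i, t i)
              * (Nat.factorial (∑ i, t i))
              / (c ^ (∑ i, t i) * (Nat.factorial (n + (∑ i, t i) - 1))) := by
        unfold WeylAlgebra.gpoly
        refine (W.l1_sum_le T _).trans (Finset.sum_le_sum ?_)
        intro t _
        rw [W.l1_smul]
        have hcoef : ‖((Nat.factorial (n - 1) : ℂ) /
              ((c : ℂ) ^ (∑ i, t i) * (Nat.factorial (n + (∑ i, t i) - 1) : ℂ)))‖
            = (Nat.factorial (n-1) : ℝ)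
              / (c ^ (∑ i, t i) * (Nat.factorial (n + (∑ i, t i) - 1))) := by
          rw [norm_div, norm_mul, norm_pow, Complex.norm_natCast, Complex.norm_natCast,
            Complex.norm_real, Real.norm_eq_abs, abs_of_pos hc0]
        rw [hcoef]
        have hl1 : W.l1 (W.amon t * star (W.amon t))
            ≤ 2 ^ (∑ i, t i) * (Nat.factorial (∑ i, t i)) := by
          rw [W.amon_star_expand]
          refine (W.l1_sum_le _ _).trans ?_
          have hterm : ∀ g ∈ Fintype.piFinset (fun i => Finset.range (t i + 1)),
              W.l1 (((∏ i, wc (t i) (g i) : ℕ) : ℂ) • W.nmon g g)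
                = ∏ i, (wc (t i) (g i) : ℝ) := by
            intro g _
            rw [W.l1_smul, W.l1_nmon, mul_one, Complex.norm_natCast]
            push_cast
            rfl
          rw [Finset.sum_congr rfl hterm, ← Finset.prod_univ_sum
            (fun i => Finset.range (t i + 1)) (fun i j => (wc (t i) j : ℝ))]
          calc ∏ i, ∑ j ∈ Finset.range (t i + 1), (wc (t i) j : ℝ)
              ≤ ∏ i, ((2 ^ (t i) * Nat.factorial (t i) : ℕ) : ℝ) := by
                apply Finset.prod_le_prod
                · intro i _
                  positivity
                · intro i _
                  exact_mod_cast wc_sum_le (t i)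
            _ = 2 ^ (∑ i, t i) * (∏ i, (Nat.factorial (t i) : ℝ)) := by
                push_cast
                rw [Finset.prod_mul_distrib, Finset.prod_pow_eq_pow_sum]
            _ ≤ 2 ^ (∑ i, t i) * (Nat.factorial (∑ i, t i)) := by
                apply mul_le_mul_of_nonneg_left _ (by positivity)
                have hd : (∏ i, Nat.factorial (t i)) ∣ Nat.factorial (∑ i, t i) :=
                  Nat.prod_factorial_dvd_factorial_sum _ _
                exact_mod_cast Nat.le_of_dvd (Nat.factorial_pos _) hd
        calc (Nat.factorial (n-1) : ℝ)
              / (c ^ (∑ i, t i) * (Nat.factorial (n + (∑ i, t i) - 1)))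
              * W.l1 (W.amon t * star (W.amon t))
            ≤ (Nat.factorial (n-1) : ℝ)
              / (c ^ (∑ i, t i) * (Nat.factorial (n + (∑ i, t i) - 1)))
              * (2 ^ (∑ i, t i) * (Nat.factorial (∑ i, t i))) := by
              apply mul_le_mul_of_nonneg_left hl1 (by positivity)
          _ = (Nat.factorial (n-1) : ℝ) * 2 ^ (∑ i, t i)
              * (Nat.factorial (∑ i, t i))
              / (c ^ (∑ i, t i) * (Nat.factorial (n + (∑ i, t i) - 1))) := by
              ring
      refine h1.trans ?_
      -- step 2 : group by degree
      set D : ℕ → ℝ := fun d => (Nat.factorial (n-1) : ℝ) * 2 ^ d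
          * (Nat.factorial d) / (c ^ d * (Nat.factorial (n + d - 1))) with hD
      have h2 : ∑ t ∈ T, D (∑ i, t i)
          = ∑ d ∈ Finset.range (r+1),
              ((Finset.piAntidiag (Finset.univ : Finset (Fin n)) d).card : ℝ) * D d := by
        have hmaps : ∀ t ∈ T, (∑ i, t i) ∈ Finset.range (r+1) := by
          intro t ht
          rw [hT, Finset.mem_filter] at ht
          rw [Finset.mem_range]
          omega
        rw [← Finset.sum_fiberwise_of_maps_to hmaps (fun t => D (∑ i, t i))]
        apply Finset.sum_congr rfl
        intro d hd
        rw [Finset.mem_range] at hd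
        have hset : T.filter (fun t => ∑ i, t i = d)
            = Finset.piAntidiag (Finset.univ : Finset (Fin n)) d := by
          ext t
          rw [Finset.mem_filter, hT, Finset.mem_filter, Finset.mem_piAntidiag,
            Fintype.mem_piFinset]
          have hrw : Finset.univ.sum t = ∑ i, t i := rfl
          constructor
          · rintro ⟨⟨-, -⟩, hsum⟩
            exact ⟨by omega, fun i _ => Finset.mem_univ i⟩
          · rintro ⟨hsum, -⟩
            have hle : ∀ i, t i ≤ ∑ j, t j := fun i =>
              Finset.single_le_sum (fun j _ => Nat.zero_le _) (Finset.mem_univ i)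
            refine ⟨⟨fun i => Finset.mem_range.mpr ?_, ?_⟩, ?_⟩
            · have := hle i; omega
            · omega
            · omega
        rw [hset]
        have : ∀ t ∈ Finset.piAntidiag (Finset.univ : Finset (Fin n)) d,
            D (∑ i, t i) = D d := by
          intro t ht
          rw [Finset.mem_piAntidiag] at ht
          rw [ht.1]
        rw [Finset.sum_congr rfl this, Finset.sum_const, nsmul_eq_mul]
      have h3 : ∀ d : ℕ,
          ((Finset.piAntidiag (Finset.univ : Finset (Fin n)) d).card : ℝ) * D d
            = (2/c)^d := by
        intro d
        have hcard : (Finset.piAntidiag (Finset.univ : Finset (Fin n)) d).card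
            = (n + d - 1).choose d := by
          rw [← Finset.map_sym_eq_piAntidiag, Finset.card_map, Finset.sym_univ,
            Finset.card_univ, Sym.card_sym_eq_choose, Fintype.card_fin]
        have hnat : (n + d - 1).choose d * d.factorial * (n-1).factorial
            = (n + d - 1).factorial := by
          have h := Nat.choose_mul_factorial_mul_factorial
            (show d ≤ n + d - 1 by omega)
          rw [show n + d - 1 - d = n - 1 by omega] at h
          exact h
        have hfac : ((n + d - 1).factorial : ℝ)
            = ((n + d - 1).choose d : ℝ) * d.factorial * (n-1).factorial := by
          exact_mod_cast hnat.symm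
        rw [hcard, hD]
        simp only []
        rw [hfac, div_pow]
        have hf1 : (0:ℝ) < (n-1).factorial := by positivity
        have hf2 : (0:ℝ) < d.factorial := by positivity
        have hch : (0:ℝ) < ((n + d - 1).choose d : ℝ) := by
          exact_mod_cast Nat.choose_pos (show d ≤ n + d - 1 by omega)
        field_simp
      -- step 3 : geometric sum
      have h4 : ∑ d ∈ Finset.range (r+1), (2/c)^d ≤ c / (c-2) := by
        have hx1 : 2/c < 1 := (div_lt_one hc0).mpr (by linarith)
        have hx0 : (0:ℝ) ≤ 2/c := by positivity
        rw [geom_sum_eq (ne_of_lt hx1)]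
        have he : ((2/c)^(r+1) - 1)/(2/c - 1) = (1 - (2/c)^(r+1))/(1 - 2/c) := by
          rw [← neg_div_neg_eq]
          ring_nf
        rw [he]
        have he2 : (1:ℝ)/(1 - 2/c) = c/(c-2) := by
          rw [show (1:ℝ) - 2/c = (c-2)/c by field_simp, one_div_div]
        rw [← he2]
        apply div_le_div₀ zero_le_one _ (by linarith [hx1]) le_rfl
        have : (0:ℝ) ≤ (2/c)^(r+1) := by positivity
        linarith
      calc ∑ t ∈ T, (Nat.factorial (n-1) : ℝ) * 2 ^ (∑ i, t i)
            * (Nat.factorial (∑ i, t i))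
            / (c ^ (∑ i, t i) * (Nat.factorial (n + (∑ i, t i) - 1)))
          = ∑ t ∈ T, D (∑ i, t i) := rfl
        _ = ∑ d ∈ Finset.range (r+1),
              ((Finset.piAntidiag (Finset.univ : Finset (Fin n)) d).card : ℝ) * D d := h2
        _ = ∑ d ∈ Finset.range (r+1), (2/c)^d := by
              apply Finset.sum_congr rfl
              intro d _
              exact h3 d
        _ ≤ c / (c-2) := h4
    calc ε * W.l1 (W.gpoly c r) ≤ ε * (c / (c-2)) :=
          mul_le_mul_of_nonneg_left key hε.le
      _ = ε * (c / (c - 2)) := rfl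
end
end

section
/- Let n ≥ 1, let c > 2 be fixed, and let p ∈ W_n be hermitian (p* = p) such that λ_inf(p) > −∞. Then for every δ > 0 there exists q ∈ ℝ, q > 0, such that for all r ∈ ℕ and all ε > 0: λ_inf(p) ≤ λ_inf(p + ε·g^r_c) ≤ λ_inf(p) + δ + ε·q. -/
open scoped ComplexOrder

noncomputable section

section InnerLemmas
variable {n : ℕ}

lemma innerD_def (f g : DSpace n) : innerD f g = f.sum fun m c => (starRingEnd ℂ) c * g m := rfl

lemma innerD_add_right (f g h : DSpace n) : innerD f (g + h) = innerD f g + innerD f h := by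
  simp [innerD_def, Finsupp.add_apply, mul_add, Finsupp.sum_add]

lemma innerD_smul_right (f g : DSpace n) (c : ℂ) : innerD f (c • g) = c * innerD f g := by
  simp only [innerD_def, Finsupp.smul_apply, smul_eq_mul, Finsupp.mul_sum]
  exact Finsupp.sum_congr fun m _ => by ring

/-- `innerD f` as a linear map in the second argument. -/
def innerDL (f : DSpace n) : DSpace n →ₗ[ℂ] ℂ where
  toFun := innerD f
  map_add' := innerD_add_right f
  map_smul' c g := innerD_smul_right f g c

lemma innerD_eVec_right (f : DSpace n) (m : Fin n → ℕ) :
    innerD f (eVec m) = (starRingEnd ℂ) (f m) := by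
  classical
  have : innerD f (eVec m) = f.sum fun m' c => if m = m' then (starRingEnd ℂ) c else 0 := by
    refine Finsupp.sum_congr fun m' _ => ?_
    simp [eVec, Finsupp.single_apply]
  rw [this, Finsupp.sum_ite_eq]
  split_ifs with h
  · rfl
  · rw [Finsupp.notMem_support_iff.mp h, map_zero]

lemma innerD_self (φ : DSpace n) :
    innerD φ φ = ((∑ m ∈ φ.support, Complex.normSq (φ m) : ℝ) : ℂ) := by
  rw [innerD_def, Finsupp.sum]
  push_cast
  refine Finset.sum_congr rfl fun m _ => ?_
  rw [Complex.normSq_eq_conj_mul_self]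

lemma innerD_eVec_eVec (m m' : Fin n → ℕ) :
    innerD (eVec m) (eVec m') = if m = m' then 1 else 0 := by
  rw [innerD_eVec_right]
  simp [eVec, Finsupp.single_apply, apply_ite (starRingEnd ℂ)]


lemma innerD_diag (T : Module.End ℂ (DSpace n)) (d : (Fin n → ℕ) → ℝ)
    (hT : ∀ m, T (eVec m) = ((d m : ℝ) : ℂ) • eVec m) (φ : DSpace n) :
    innerD φ (T φ) = ((∑ m ∈ φ.support, d m * Complex.normSq (φ m) : ℝ) : ℂ) := by
  classical
  have hφ : φ = ∑ m ∈ φ.support, (φ m) • eVec m := by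
    conv_lhs => rw [← Finsupp.sum_single φ]
    rw [Finsupp.sum]
    refine Finset.sum_congr rfl fun m _ => ?_
    simp [eVec, Finsupp.smul_single]
  have h1 : T φ = ∑ m ∈ φ.support, (φ m * d m) • eVec m := by
    conv_lhs => rw [hφ, map_sum]
    refine Finset.sum_congr rfl fun m _ => ?_
    rw [map_smul, hT m, smul_smul]
  calc innerD φ (T φ) = innerDL φ (T φ) := rfl
    _ = ∑ m ∈ φ.support, (φ m * d m) * innerD φ (eVec m) := by
        rw [h1, map_sum]
        refine Finset.sum_congr rfl fun m _ => ?_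
        rw [map_smul]; rfl
    _ = _ := by
        push_cast
        refine Finset.sum_congr rfl fun m _ => ?_
        rw [innerD_eVec_right, Complex.normSq_eq_conj_mul_self]
        ring

end InnerLemmas
section RepLemmas
variable {n : ℕ} {W : WeylAlgebra n} (S : Schrodinger W)

lemma rep_star_pow (i : Fin n) (k : ℕ) (m : Fin n → ℕ) :
    S.rep (star (W.a i) ^ k) (eVec m) =
      ((Real.sqrt (∏ j ∈ Finset.range k, ((m i : ℝ) + j + 1)) : ℝ) : ℂ) •
        eVec (Function.update m i (m i + k)) := by
  induction k generalizing m with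
  | zero => simp [Function.update_eq_self]
  | succ k ih =>
      rw [pow_succ', map_mul, Module.End.mul_apply, ih, map_smul, S.rep_astar,
        Function.update_self, Function.update_idem, smul_smul, ← Complex.ofReal_mul,
        ← Real.sqrt_mul (by positivity), Finset.prod_range_succ]
      have h2 : m i + k + 1 = m i + (k + 1) := by omega
      rw [h2]
      norm_num

lemma rep_pow_a (i : Fin n) (k : ℕ) (m : Fin n → ℕ) :
    S.rep (W.a i ^ k) (eVec (Function.update m i (m i + k))) =
      ((Real.sqrt (∏ j ∈ Finset.range k, ((m i : ℝ) + j + 1)) : ℝ) : ℂ) • eVec m := by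
  induction k generalizing m with
  | zero => simp [Function.update_eq_self]
  | succ k ih =>
      rw [pow_succ, map_mul, Module.End.mul_apply, S.rep_a, Function.update_self,
        Function.update_idem]
      have h1 : m i + (k + 1) - 1 = m i + k := by omega
      rw [h1, map_smul, ih, smul_smul, ← Complex.ofReal_mul,
        ← Real.sqrt_mul (by positivity), Finset.prod_range_succ]
      congr 3
      push_cast
      ring

end RepLemmas
section MonLemmas
variable {n : ℕ} {W : WeylAlgebra n} (S : Schrodinger W)

/-- Star of a list product reverses the order. -/
lemma star_list_prod {R : Type*} [Monoid R] [StarMul R] (l : List R) :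
    star l.prod = (l.map star).reverse.prod := by
  induction l with
  | nil => simp
  | cons a l ih => simp [star_mul, ih]

lemma rep_star_list (t : Fin n → ℕ) (l : List (Fin n)) (hl : l.Nodup) (m : Fin n → ℕ) :
    S.rep ((l.map fun i => star (W.a i) ^ t i).prod) (eVec m) =
      ((Real.sqrt (∏ i ∈ l.toFinset, ∏ j ∈ Finset.range (t i), ((m i : ℝ) + j + 1)) : ℝ) : ℂ) •
        eVec (fun i => if i ∈ l then m i + t i else m i) := by
  classical
  induction l generalizing m with
  | nil => simp
  | cons i₀ l ih =>
      obtain ⟨hi₀, hl'⟩ := List.nodup_cons.mp hl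
      rw [List.map_cons, List.prod_cons, map_mul, Module.End.mul_apply, ih hl', map_smul,
        rep_star_pow]
      rw [smul_smul, ← Complex.ofReal_mul, ← Real.sqrt_mul (by positivity)]
      congr 2
      · rw [List.toFinset_cons, Finset.prod_insert (by simpa using hi₀), if_neg hi₀]
        rw [mul_comm]
      · funext i
        rcases eq_or_ne i i₀ with rfl | h
        · simp [Function.update_self, hi₀]
        · simp only [Function.update_of_ne h, List.mem_cons]
          by_cases h2 : i ∈ l <;> simp [h, h2]

lemma rep_a_list (t : Fin n → ℕ) (l : List (Fin n)) (hl : l.Nodup) (m : Fin n → ℕ) :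
    S.rep ((l.map fun i => W.a i ^ t i).prod)
        (eVec (fun i => if i ∈ l then m i + t i else m i)) =
      ((Real.sqrt (∏ i ∈ l.toFinset, ∏ j ∈ Finset.range (t i), ((m i : ℝ) + j + 1)) : ℝ) : ℂ) •
        eVec m := by
  classical
  induction l generalizing m with
  | nil => simp
  | cons i₀ l ih =>
      obtain ⟨hi₀, hl'⟩ := List.nodup_cons.mp hl
      rw [List.map_cons, List.prod_cons, map_mul, Module.End.mul_apply]
      have hpad : (fun i => if i ∈ (i₀ :: l) then m i + t i else m i) =
          (fun i => if i ∈ l then (Function.update m i₀ (m i₀ + t i₀)) i + t i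
            else (Function.update m i₀ (m i₀ + t i₀)) i) := by
        funext i
        rcases eq_or_ne i i₀ with rfl | h
        · simp [Function.update_self, hi₀]
        · simp only [Function.update_of_ne h, List.mem_cons]
          by_cases h2 : i ∈ l <;> simp [h, h2]
      rw [hpad, ih hl', map_smul, rep_pow_a, smul_smul, ← Complex.ofReal_mul,
        ← Real.sqrt_mul (by positivity)]
      congr 2
      have hupd : (∏ i ∈ l.toFinset, ∏ j ∈ Finset.range (t i),
            ((Function.update m i₀ (m i₀ + t i₀) i : ℝ) + j + 1)) =
          ∏ i ∈ l.toFinset, ∏ j ∈ Finset.range (t i), ((m i : ℝ) + j + 1) := by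
        refine Finset.prod_congr rfl fun i hi => ?_
        have hne : i ≠ i₀ := by rintro rfl; exact hi₀ (List.mem_toFinset.mp hi)
        rw [Function.update_of_ne hne]
      rw [hupd, List.toFinset_cons, Finset.prod_insert (by simpa using hi₀), mul_comm]

/-- `Dval m t = ∏ i (m i + 1)(m i + 2)⋯(m i + t i)` as a real number. -/
def Dval (m t : Fin n → ℕ) : ℝ := ∏ i, ∏ j ∈ Finset.range (t i), ((m i : ℝ) + j + 1)

lemma Dval_nonneg (m t : Fin n → ℕ) : 0 ≤ Dval m t := by
  unfold Dval; positivity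

lemma rep_star_amon (t m : Fin n → ℕ) :
    S.rep (star (W.amon t)) (eVec m) =
      ((Real.sqrt (Dval m t) : ℝ) : ℂ) • eVec (fun i => m i + t i) := by
  classical
  have h1 : star (W.amon t) =
      (((List.finRange n).reverse.map fun i => star (W.a i) ^ t i)).prod := by
    rw [WeylAlgebra.amon, List.ofFn_eq_map, star_list_prod, List.map_map, ← List.map_reverse]
    congr 1
    refine List.map_congr_left fun i _ => ?_
    simp [Function.comp, star_pow]
  rw [h1, rep_star_list S t _ (List.nodup_reverse.mpr (List.nodup_finRange n))]
  congr 2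
  · rw [List.toFinset_reverse, List.toFinset_finRange]; rfl
  · funext i; simp [List.mem_reverse, List.mem_finRange]

lemma rep_amon (t m : Fin n → ℕ) :
    S.rep (W.amon t) (eVec (fun i => m i + t i)) =
      ((Real.sqrt (Dval m t) : ℝ) : ℂ) • eVec m := by
  classical
  have h1 : W.amon t = ((List.finRange n).map fun i => W.a i ^ t i).prod := by
    rw [WeylAlgebra.amon, List.ofFn_eq_map]
  have h2 : (fun i => m i + t i) =
      (fun i => if i ∈ List.finRange n then m i + t i else m i) := by
    funext i; simp [List.mem_finRange]
  rw [h1, h2, rep_a_list S t _ (List.nodup_finRange n), List.toFinset_finRange]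
  rfl

lemma rep_amon_mul_star (t m : Fin n → ℕ) :
    S.rep (W.amon t * star (W.amon t)) (eVec m) = ((Dval m t : ℝ) : ℂ) • eVec m := by
  rw [map_mul, Module.End.mul_apply, rep_star_amon, map_smul, rep_amon, smul_smul,
    ← Complex.ofReal_mul, Real.mul_self_sqrt (Dval_nonneg m t)]

end MonLemmas
section Bounds

/-- The real coefficient of `a^t (a^t)*` in `g^r_c`. -/
def coefR (n : ℕ) (c : ℝ) (k : ℕ) : ℝ :=
  (Nat.factorial (n - 1) : ℝ) / (c ^ k * (Nat.factorial (n + k - 1) : ℝ))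

lemma coefR_nonneg {n : ℕ} {c : ℝ} (hc : 0 < c) (k : ℕ) : 0 ≤ coefR n c k := by
  unfold coefR; positivity

variable {n : ℕ} {W : WeylAlgebra n} (S : Schrodinger W)

lemma rep_gpoly (c : ℝ) (r : ℕ) (m : Fin n → ℕ) :
    S.rep (W.gpoly c r) (eVec m) =
      ((∑ t ∈ (Fintype.piFinset fun _ : Fin n => Finset.range (r + 1)).filter
          (fun t => ∑ i, t i ≤ r), coefR n c (∑ i, t i) * Dval m t : ℝ) : ℂ) • eVec m := by
  classical
  rw [WeylAlgebra.gpoly, map_sum, LinearMap.sum_apply]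
  simp only [map_smul, LinearMap.smul_apply, rep_amon_mul_star, smul_smul]
  rw [← Finset.sum_smul]
  congr 1
  push_cast [coefR]
  refine Finset.sum_congr rfl fun t _ => ?_
  norm_num

/-- `Dval` as a natural number. -/
def Dnat (m t : Fin n → ℕ) : ℕ := ∏ i, ∏ j ∈ Finset.range (t i), (m i + j + 1)

lemma Dval_eq_nat (m t : Fin n → ℕ) : Dval m t = (Dnat m t : ℝ) := by
  unfold Dval Dnat
  push_cast
  rfl

lemma prod_shift_mul_factorial (a b : ℕ) :
    (∏ j ∈ Finset.range b, (a + j + 1)) * a.factorial = (a + b).factorial := by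
  induction b with
  | zero => simp
  | succ b ih =>
      rw [Finset.prod_range_succ, mul_right_comm, ih, ← Nat.add_assoc, Nat.factorial_succ]
      ring

lemma fact_le_pow_mul (M k : ℕ) : (M + k).factorial ≤ (k + M) ^ M * k.factorial := by
  induction M with
  | zero => simp
  | succ M ih =>
      have h1 : (M + 1 + k).factorial = (M + k + 1) * (M + k).factorial := by
        rw [show M + 1 + k = (M + k) + 1 by omega, Nat.factorial_succ]
      rw [h1, pow_succ]
      calc (M + k + 1) * (M + k).factorial ≤ (M + k + 1) * ((k + M) ^ M * k.factorial) :=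
            Nat.mul_le_mul_left _ ih
        _ ≤ (k + (M + 1)) * ((k + (M + 1)) ^ M * k.factorial) := by
            refine Nat.mul_le_mul (by omega) (Nat.mul_le_mul_right _ ?_)
            exact Nat.pow_le_pow_left (by omega) M
        _ = (k + (M + 1)) ^ M * (k + (M + 1)) * k.factorial := by ring
        _ = _ := by ring

lemma key_nat_bound (hn : 1 ≤ n) (m t : Fin n → ℕ) :
    (Nat.factorial (n - 1)) * Dnat m t ≤
      (Nat.factorial (n + (∑ i, t i) - 1)) * ((∑ i, t i) + (∑ i, m i)) ^ (∑ i, m i) := by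
  set M := ∑ i, m i
  set k := ∑ i, t i
  have h1 : Dnat m t * ∏ i, (m i).factorial = ∏ i, (m i + t i).factorial := by
    rw [Dnat, ← Finset.prod_mul_distrib]
    exact Finset.prod_congr rfl fun i _ => prod_shift_mul_factorial (m i) (t i)
  have h2 : Dnat m t ≤ ∏ i, (m i + t i).factorial := by
    calc Dnat m t ≤ Dnat m t * ∏ i, (m i).factorial :=
          Nat.le_mul_of_pos_right _ (Nat.prod_factorial_pos _ _)
      _ = _ := h1
  have h3 : (∏ i, (m i + t i).factorial) ≤ (M + k).factorial := by
    have := Nat.prod_factorial_dvd_factorial_sum Finset.univ (fun i => m i + t i)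
    have hsum : ∑ i, (m i + t i) = M + k := Finset.sum_add_distrib
    rw [hsum] at this
    exact Nat.le_of_dvd (M + k).factorial_pos this
  have h4 : Dnat m t ≤ (k + M) ^ M * k.factorial :=
    le_trans (le_trans h2 h3) (fact_le_pow_mul M k)
  calc (n-1).factorial * Dnat m t ≤ (n-1).factorial * ((k + M) ^ M * k.factorial) :=
        Nat.mul_le_mul_left _ h4
    _ = ((n-1).factorial * k.factorial) * (k + M) ^ M := by ring
    _ ≤ (n + k - 1).factorial * (k + M) ^ M := by
        refine Nat.mul_le_mul_right _ ?_
        have hd : (n-1).factorial * k.factorial ∣ ((n-1) + k).factorial :=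
          Nat.factorial_mul_factorial_dvd_factorial_add _ _
        have : (n - 1) + k = n + k - 1 := by omega
        rw [this] at hd
        exact Nat.le_of_dvd (n + k - 1).factorial_pos hd

lemma coef_Dval_le (hn : 1 ≤ n) {c : ℝ} (hc : 0 < c) (m t : Fin n → ℕ) :
    coefR n c (∑ i, t i) * Dval m t ≤
      (((∑ i, t i : ℕ) : ℝ) + (∑ i, m i : ℕ)) ^ (∑ i, m i) / c ^ (∑ i, t i) := by
  set M := ∑ i, m i
  set k := ∑ i, t i
  have hck : (0:ℝ) < c ^ k := pow_pos hc k
  have hfk : (0:ℝ) < ((n + k - 1).factorial : ℝ) := by positivity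
  have hnat := key_nat_bound hn m t
  have hnat' : ((n-1).factorial * Dnat m t : ℝ) ≤
      ((n + k - 1).factorial : ℝ) * (((k:ℝ) + M) ^ M) := by
    calc ((n-1).factorial * Dnat m t : ℝ)
        ≤ (((n + k - 1).factorial * ((k + M) ^ M) : ℕ) : ℝ) := by exact_mod_cast hnat
      _ = _ := by push_cast; ring
  calc coefR n c k * Dval m t
      = ((n-1).factorial * Dnat m t : ℝ) / (c ^ k * ((n + k - 1).factorial : ℝ)) := by
        rw [coefR, Dval_eq_nat]; push_cast; ring
    _ ≤ (((n + k - 1).factorial : ℝ) * (((k:ℝ) + M) ^ M)) / (c ^ k * ((n + k - 1).factorial : ℝ)) := by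
        gcongr
    _ = (((k:ℝ) + M) ^ M) / c ^ k := by
        field_simp

end Bounds
section Summ

variable {n : ℕ}

/-- The dominating series term. -/
def Fterm (n M : ℕ) (c : ℝ) (k : ℕ) : ℝ := ((k:ℝ) + 1) ^ n * (((k:ℝ) + M) ^ M / c ^ k)

lemma Fterm_nonneg {c : ℝ} (hc : 0 < c) (n M k : ℕ) : 0 ≤ Fterm n M c k := by
  unfold Fterm; positivity

set_option maxHeartbeats 1000000 in
lemma summable_Fterm (n M : ℕ) {c : ℝ} (hc : 1 < c) : Summable (Fterm n M c) := by
  have hc0 : (0:ℝ) < c := lt_trans one_pos hc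
  set x : ℝ := 1 / c with hx
  have hx0 : 0 < x := by positivity
  have hx1 : x < 1 := by rw [hx]; rw [div_lt_one hc0]; exact hc
  have hxn : ‖x‖ < 1 := by rw [Real.norm_eq_abs, abs_of_pos hx0]; exact hx1
  set d := n + M
  set a := M + 1
  have h0 : Summable (fun j : ℕ => (j:ℝ) ^ d * x ^ j) :=
    summable_pow_mul_geometric_of_norm_lt_one d hxn
  have h1 : Summable (fun k : ℕ => ((k + a : ℕ):ℝ) ^ d * x ^ (k + a)) :=
    (summable_nat_add_iff a).mpr h0
  have h2 : Summable (fun k : ℕ => (((k + a : ℕ):ℝ) ^ d * x ^ (k + a)) * (x ^ a)⁻¹) :=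
    h1.mul_right _
  have h3 : Summable (fun k : ℕ => ((k:ℝ) + a) ^ d * x ^ k) := by
    refine h2.congr fun k => ?_
    have hxa : (x:ℝ) ^ a ≠ 0 := by positivity
    field_simp [pow_add]
    push_cast
    ring
  refine Summable.of_nonneg_of_le (fun k => Fterm_nonneg hc0 n M k) (fun k => ?_) h3
  unfold Fterm
  have hxk : (1:ℝ) / c ^ k = x ^ k := by rw [hx, div_pow, one_pow]
  have : ((k:ℝ) + M) ^ M / c ^ k = ((k:ℝ) + M) ^ M * x ^ k := by
    rw [div_eq_mul_one_div, hxk]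
  rw [this, ← mul_assoc]
  have hbound : ((k:ℝ) + 1) ^ n * ((k:ℝ) + M) ^ M ≤ ((k:ℝ) + a) ^ d := by
    have ha1 : (1:ℝ) ≤ (a:ℝ) := by simp only [a]; push_cast; linarith
    have haM : ((M:ℕ):ℝ) ≤ (a:ℝ) := by simp only [a]; push_cast; linarith
    have h4 : ((k:ℝ) + 1) ^ n ≤ ((k:ℝ) + a) ^ n :=
      pow_le_pow_left₀ (by positivity) (by linarith) n
    have h5 : ((k:ℝ) + M) ^ M ≤ ((k:ℝ) + a) ^ M :=
      pow_le_pow_left₀ (by positivity) (by linarith) M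
    calc ((k:ℝ) + 1) ^ n * ((k:ℝ) + M) ^ M ≤ ((k:ℝ) + a) ^ n * ((k:ℝ) + a) ^ M :=
          mul_le_mul h4 h5 (by positivity) (by positivity)
      _ = ((k:ℝ) + a) ^ d := by rw [← pow_add]
  have hxkpos : (0:ℝ) ≤ x ^ k := by positivity
  exact mul_le_mul_of_nonneg_right hbound hxkpos

/-- The uniform-in-`r` bound `Q` for base `M = ‖m‖₁`. -/
def Qbound (n M : ℕ) (c : ℝ) : ℝ := ∑' k, Fterm n M c k

lemma Qbound_nonneg (n M : ℕ) {c : ℝ} (hc : 1 < c) : 0 ≤ Qbound n M c :=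
  tsum_nonneg fun k => Fterm_nonneg (lt_trans one_pos hc) n M k

lemma Gsum_le_Qbound (hn : 1 ≤ n) {c : ℝ} (hc : 1 < c) (r : ℕ) (m : Fin n → ℕ) :
    ∑ t ∈ (Fintype.piFinset fun _ : Fin n => Finset.range (r + 1)).filter
        (fun t => ∑ i, t i ≤ r), coefR n c (∑ i, t i) * Dval m t ≤
      Qbound n (∑ i, m i) c := by
  classical
  have hc0 : (0:ℝ) < c := lt_trans one_pos hc
  set M := ∑ i, m i with hM
  set Sr := (Fintype.piFinset fun _ : Fin n => Finset.range (r + 1)).filter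
      (fun t => ∑ i, t i ≤ r) with hSr
  have step1 : ∑ t ∈ Sr, coefR n c (∑ i, t i) * Dval m t ≤
      ∑ t ∈ Sr, (((∑ i, t i : ℕ):ℝ) + M) ^ M / c ^ (∑ i, t i) :=
    Finset.sum_le_sum fun t _ => coef_Dval_le hn hc0 m t
  have step2 : ∑ t ∈ Sr, (((∑ i, t i : ℕ):ℝ) + M) ^ M / c ^ (∑ i, t i) =
      ∑ k ∈ Finset.range (r + 1), ∑ t ∈ Sr.filter (fun t => ∑ i, t i = k),
        (((∑ i, t i : ℕ):ℝ) + M) ^ M / c ^ (∑ i, t i) := by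
    refine (Finset.sum_fiberwise_of_maps_to (fun t ht => ?_) _).symm
    rw [Finset.mem_range, Nat.lt_succ_iff]
    exact (Finset.mem_filter.mp ht).2
  have step3 : ∀ k ∈ Finset.range (r + 1),
      ∑ t ∈ Sr.filter (fun t => ∑ i, t i = k),
        (((∑ i, t i : ℕ):ℝ) + M) ^ M / c ^ (∑ i, t i) ≤ Fterm n M c k := by
    intro k _
    have heq : ∑ t ∈ Sr.filter (fun t => ∑ i, t i = k),
        (((∑ i, t i : ℕ):ℝ) + M) ^ M / c ^ (∑ i, t i) =
        (Sr.filter (fun t => ∑ i, t i = k)).card • (((k:ℝ) + M) ^ M / c ^ k) := by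
      rw [Finset.sum_congr rfl (fun t ht => ?_), Finset.sum_const]
      rw [(Finset.mem_filter.mp ht).2]
    rw [heq, nsmul_eq_mul, Fterm]
    have hcard : ((Sr.filter (fun t => ∑ i, t i = k)).card : ℝ) ≤ ((k:ℝ) + 1) ^ n := by
      have hsub : Sr.filter (fun t => ∑ i, t i = k) ⊆
          Fintype.piFinset fun _ : Fin n => Finset.range (k + 1) := by
        intro t ht
        have hk : ∑ i, t i = k := (Finset.mem_filter.mp ht).2
        rw [Fintype.mem_piFinset]
        intro i
        rw [Finset.mem_range, Nat.lt_succ_iff, ← hk]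
        exact Finset.single_le_sum (f := t) (fun _ _ => Nat.zero_le _) (Finset.mem_univ i)
      calc ((Sr.filter (fun t => ∑ i, t i = k)).card : ℝ)
          ≤ ((Fintype.piFinset fun _ : Fin n => Finset.range (k + 1)).card : ℝ) := by
            exact_mod_cast Finset.card_le_card hsub
        _ = ((k:ℝ) + 1) ^ n := by
            rw [Fintype.card_piFinset]
            push_cast
            simp
    exact mul_le_mul_of_nonneg_right hcard (by positivity)
  calc ∑ t ∈ Sr, coefR n c (∑ i, t i) * Dval m t
      ≤ ∑ k ∈ Finset.range (r + 1), ∑ t ∈ Sr.filter (fun t => ∑ i, t i = k),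
        (((∑ i, t i : ℕ):ℝ) + M) ^ M / c ^ (∑ i, t i) := step2 ▸ step1
    _ ≤ ∑ k ∈ Finset.range (r + 1), Fterm n M c k := Finset.sum_le_sum step3
    _ ≤ Qbound n M c :=
        Summable.sum_le_tsum _ (fun k _ => Fterm_nonneg hc0 n M k) (summable_Fterm n M hc)

end Summ
section Assemble
variable {n : ℕ} {W : WeylAlgebra n} (S : Schrodinger W)

lemma innerD_eVec_self (m : Fin n → ℕ) : innerD (eVec m) (eVec m) = 1 := by
  rw [innerD_eVec_eVec, if_pos rfl]

lemma energySet_nonempty (x : W.carrier) : (S.energySet x).Nonempty :=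
  ⟨_, ⟨eVec (fun _ => 0), innerD_eVec_self _, rfl⟩⟩

lemma energy_split (p g' : W.carrier) (ε : ℝ) (φ : DSpace n) :
    (innerD φ (S.rep (p + (ε : ℂ) • g') φ)).re =
      (innerD φ (S.rep p φ)).re + ε * (innerD φ (S.rep g' φ)).re := by
  rw [map_add, map_smul, LinearMap.add_apply, LinearMap.smul_apply, innerD_add_right,
    innerD_smul_right, Complex.add_re]
  congr 1
  simp [Complex.mul_re]

lemma innerD_gpoly_re (c : ℝ) (r : ℕ) (φ : DSpace n) :
    (innerD φ (S.rep (W.gpoly c r) φ)).re =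
      ∑ m ∈ φ.support,
        (∑ t ∈ (Fintype.piFinset fun _ : Fin n => Finset.range (r + 1)).filter
            (fun t => ∑ i, t i ≤ r), coefR n c (∑ i, t i) * Dval m t) *
          Complex.normSq (φ m) := by
  rw [innerD_diag (S.rep (W.gpoly c r)) _ (rep_gpoly S c r) φ, Complex.ofReal_re]

lemma innerD_gpoly_nonneg {c : ℝ} (hc : 0 < c) (r : ℕ) (φ : DSpace n) :
    0 ≤ (innerD φ (S.rep (W.gpoly c r) φ)).re := by
  rw [innerD_gpoly_re]
  refine Finset.sum_nonneg fun m _ => mul_nonneg (Finset.sum_nonneg fun t _ =>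
    mul_nonneg (coefR_nonneg hc _) (Dval_nonneg m t)) (Complex.normSq_nonneg _)

lemma normSq_sum_eq_one {φ : DSpace n} (hφ : innerD φ φ = 1) :
    ∑ m ∈ φ.support, Complex.normSq (φ m) = 1 := by
  have := innerD_self φ
  rw [hφ] at this
  exact_mod_cast this.symm

lemma innerD_gpoly_le (hn : 1 ≤ n) {c : ℝ} (hc : 1 < c) (r : ℕ) {φ : DSpace n}
    (hφ : innerD φ φ = 1) :
    (innerD φ (S.rep (W.gpoly c r) φ)).re ≤
      ∑ m ∈ φ.support, Qbound n (∑ i, m i) c := by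
  rw [innerD_gpoly_re]
  refine Finset.sum_le_sum fun m hm => ?_
  have h1 := Gsum_le_Qbound hn hc r m
  have h2 : Complex.normSq (φ m) ≤ 1 := by
    rw [← normSq_sum_eq_one hφ]
    exact Finset.single_le_sum (fun _ _ => Complex.normSq_nonneg _) hm
  have h3 : 0 ≤ Complex.normSq (φ m) := Complex.normSq_nonneg _
  calc _ ≤ Qbound n (∑ i, m i) c * Complex.normSq (φ m) := by
        refine mul_le_mul_of_nonneg_right ?_ h3
        exact le_trans (Finset.sum_le_sum fun t _ => le_refl _) h1
    _ ≤ Qbound n (∑ i, m i) c * 1 :=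
        mul_le_mul_of_nonneg_left h2 (Qbound_nonneg n _ hc)
    _ = _ := mul_one _

end Assemble
/-- For hermitian `p` with `λ_inf(p) > -∞` and fixed `c > 2`:
for every `δ > 0` there is `q > 0` such that for all `r` and all `ε > 0`,
`λ_inf(p) ≤ λ_inf(p + ε·g^r_c) ≤ λ_inf(p) + δ + ε·q`. -/
theorem lambdaInf_perturbation {n : ℕ} (hn : 1 ≤ n) (c : ℝ) (hc : 2 < c)
    (W : WeylAlgebra n) (S : Schrodinger W) (p : W.carrier) (hherm : star p = p)
    (hbdd : BddBelow (S.energySet p)) :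
    ∀ δ > (0 : ℝ), ∃ q : ℝ, 0 < q ∧ ∀ (r : ℕ) (ε : ℝ), 0 < ε →
      S.lambdaInf p ≤ S.lambdaInf (p + (ε : ℂ) • W.gpoly c r) ∧
      S.lambdaInf (p + (ε : ℂ) • W.gpoly c r) ≤ S.lambdaInf p + δ + ε * q := by
  intro δ hδ
  have hc1 : (1:ℝ) < c := by linarith
  have hc0 : (0:ℝ) < c := by linarith
  obtain ⟨x₀, hx₀, hlt⟩ := exists_lt_of_csInf_lt (energySet_nonempty S p)
    (lt_add_of_pos_right (S.lambdaInf p) hδ)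
  obtain ⟨φ₀, hφ₀, hx₀eq⟩ := hx₀
  set q : ℝ := 1 + ∑ m ∈ φ₀.support, Qbound n (∑ i, m i) c with hq
  have hq0 : 0 < q := by
    have : 0 ≤ ∑ m ∈ φ₀.support, Qbound n (∑ i, m i) c :=
      Finset.sum_nonneg fun m _ => Qbound_nonneg n _ hc1
    linarith
  refine ⟨q, hq0, fun r ε hε => ?_⟩
  have hGnn : ∀ φ : DSpace n, 0 ≤ (innerD φ (S.rep (W.gpoly c r) φ)).re :=
    innerD_gpoly_nonneg S hc0 r
  have hlow : ∀ b ∈ S.energySet (p + (ε : ℂ) • W.gpoly c r), S.lambdaInf p ≤ b := by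
    rintro b ⟨φ, hφ1, rfl⟩
    rw [energy_split]
    have h1 : S.lambdaInf p ≤ (innerD φ (S.rep p φ)).re := csInf_le hbdd ⟨φ, hφ1, rfl⟩
    have h2 : 0 ≤ ε * (innerD φ (S.rep (W.gpoly c r) φ)).re := mul_nonneg hε.le (hGnn φ)
    linarith
  have hbdd' : BddBelow (S.energySet (p + (ε : ℂ) • W.gpoly c r)) := ⟨S.lambdaInf p, hlow⟩
  constructor
  · exact le_csInf (energySet_nonempty S _) hlow
  · have hmem : (innerD φ₀ (S.rep (p + (ε : ℂ) • W.gpoly c r) φ₀)).re ∈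
        S.energySet (p + (ε : ℂ) • W.gpoly c r) := ⟨φ₀, hφ₀, rfl⟩
    have step1 : S.lambdaInf (p + (ε : ℂ) • W.gpoly c r) ≤
        (innerD φ₀ (S.rep (p + (ε : ℂ) • W.gpoly c r) φ₀)).re := csInf_le hbdd' hmem
    have step2 : (innerD φ₀ (S.rep (p + (ε : ℂ) • W.gpoly c r) φ₀)).re =
        x₀ + ε * (innerD φ₀ (S.rep (W.gpoly c r) φ₀)).re := by
      rw [energy_split, hx₀eq]
    have step3 : (innerD φ₀ (S.rep (W.gpoly c r) φ₀)).re ≤ q := by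
      have := innerD_gpoly_le S hn hc1 r hφ₀
      linarith
    have step4 : ε * (innerD φ₀ (S.rep (W.gpoly c r) φ₀)).re ≤ ε * q :=
      mul_le_mul_of_nonneg_left step3 hε.le
    linarith
end
end

section
/- In the Weyl algebra W_1 with generator a and adjoint a*, for every k ∈ ℕ the element a^{k+1}(a*)^{k+1} − a*·a^k (a*)^k·a belongs to Σ². Moreover, a^{k+1}(a*)^{k+1} − a*·a^k (a*)^k·a = (k+1)·a^k(a*)^k + k·a^{k−1}(a*)^k a. -/
open scoped ComplexOrder

noncomputable section

section WeylHelpers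

private lemma nc_cast_comm {R : Type*} [Ring R] (n : ℕ) (x : R) :
    x * (n : R) = (n : R) * x := (Nat.cast_commute n x).symm

private lemma nc_cast_left {R : Type*} [Ring R] (n : ℕ) (x y : R) :
    x * ((n : R) * y) = (n : R) * (x * y) := by
  rw [← mul_assoc, nc_cast_comm, mul_assoc]

private lemma nc_pow_comm {R : Type*} [Ring R] (k : ℕ) (x : R) :
    x * x ^ k = x ^ k * x := by rw [← pow_succ', pow_succ]

private lemma nc_pow_left {R : Type*} [Ring R] (k : ℕ) (x y : R) :
    x * (x ^ k * y) = x ^ k * (x * y) := by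
  rw [← mul_assoc, nc_pow_comm, mul_assoc]

variable (W : WeylAlgebra 1)

private lemma weyl_as_eq : W.a 0 * star (W.a 0) = star (W.a 0) * W.a 0 + 1 := by
  have h := W.ccr 0 0
  simp only [if_true, eq_self_iff_true] at h
  exact sub_eq_iff_eq_add'.mp h

private lemma weyl_a_spow (m : ℕ) :
    W.a 0 * star (W.a 0) ^ (m + 1) =
      star (W.a 0) ^ (m + 1) * W.a 0 + ((m + 1 : ℕ) : W.carrier) * star (W.a 0) ^ m := by
  induction m with
  | zero => simpa using weyl_as_eq W
  | succ n ih =>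
    have h1 : W.a 0 * star (W.a 0) ^ (n + 1 + 1)
        = (W.a 0 * star (W.a 0) ^ (n + 1)) * star (W.a 0) := by
      rw [pow_succ, ← mul_assoc]
    rw [h1, ih, add_mul, mul_assoc, weyl_as_eq W]
    push_cast
    noncomm_ring [nc_cast_comm, nc_cast_left, nc_pow_comm, nc_pow_left]

private lemma weyl_pow_s (m : ℕ) :
    W.a 0 ^ (m + 1) * star (W.a 0) =
      star (W.a 0) * W.a 0 ^ (m + 1) + ((m + 1 : ℕ) : W.carrier) * W.a 0 ^ m := by
  induction m with
  | zero => simpa using weyl_as_eq W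
  | succ n ih =>
    have h1 : W.a 0 ^ (n + 1 + 1) * star (W.a 0)
        = W.a 0 * (W.a 0 ^ (n + 1) * star (W.a 0)) := by
      rw [pow_succ', mul_assoc]
    rw [h1, ih, mul_add, ← mul_assoc, weyl_as_eq W]
    push_cast
    noncomm_ring [nc_cast_comm, nc_cast_left, nc_pow_comm, nc_pow_left]

private lemma weyl_isSOS_star_mul (f : W.carrier) : W.IsSOS (star f * f) :=
  ⟨1, fun _ => f, by simp⟩

private lemma weyl_isSOS_zero : W.IsSOS 0 := ⟨0, fun _ => 0, by simp⟩

private lemma weyl_isSOS_add {p q : W.carrier} (hp : W.IsSOS p) (hq : W.IsSOS q) :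
    W.IsSOS (p + q) := by
  obtain ⟨N, f, rfl⟩ := hp
  obtain ⟨M, g, rfl⟩ := hq
  refine ⟨N + M, Fin.append f g, ?_⟩
  rw [Fin.sum_univ_add]
  simp [Fin.append_left, Fin.append_right]

private lemma weyl_isSOS_nsmul {p : W.carrier} (hp : W.IsSOS p) (n : ℕ) :
    W.IsSOS ((n : W.carrier) * p) := by
  induction n with
  | zero => simpa using weyl_isSOS_zero W
  | succ n ih =>
    have h : ((n + 1 : ℕ) : W.carrier) * p = (n : W.carrier) * p + p := by
      push_cast; noncomm_ring
    rw [h]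
    exact weyl_isSOS_add W ih hp

/-- The auxiliary family `A m j = a^m (a*)^(m+j) a^j`. -/
private def weylA (m j : ℕ) : W.carrier :=
  W.a 0 ^ m * star (W.a 0) ^ (m + j) * W.a 0 ^ j

private lemma weylA_rec (m j : ℕ) :
    weylA W (m + 1) j = weylA W m (j + 1) + ((m + j + 1 : ℕ) : W.carrier) * weylA W m j := by
  unfold weylA
  have h1 : W.a 0 ^ (m + 1) * star (W.a 0) ^ (m + 1 + j)
      = W.a 0 ^ m * (W.a 0 * star (W.a 0) ^ (m + j + 1)) := by
    rw [show m + 1 + j = m + j + 1 from by omega, pow_succ, mul_assoc]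
  rw [h1, weyl_a_spow W (m + j)]
  rw [show m + (j + 1) = m + j + 1 from by omega, pow_succ']
  noncomm_ring [nc_cast_comm, nc_cast_left, nc_pow_comm, nc_pow_left]

private lemma weylA_sos (m j : ℕ) : W.IsSOS (weylA W m j) := by
  induction m generalizing j with
  | zero =>
    have h : weylA W 0 j = star (W.a 0 ^ j) * W.a 0 ^ j := by
      simp [weylA, star_pow]
    rw [h]
    exact weyl_isSOS_star_mul W _
  | succ n ih =>
    rw [weylA_rec]
    exact weyl_isSOS_add W (ih (j + 1)) (weyl_isSOS_nsmul W (ih j) _)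

private lemma weyl_key (k : ℕ) :
    W.a 0 ^ (k + 1) * star (W.a 0) ^ (k + 1) -
        star (W.a 0) * (W.a 0 ^ k * star (W.a 0) ^ k) * W.a 0 =
      ((k + 1 : ℕ) : W.carrier) * (W.a 0 ^ k * star (W.a 0) ^ k) +
        ((k : ℕ) : W.carrier) * (W.a 0 ^ (k - 1) * star (W.a 0) ^ k * W.a 0) := by
  cases k with
  | zero =>
    have h := weyl_as_eq W
    simp only [zero_add, pow_one, pow_zero, one_mul, mul_one, Nat.cast_one, Nat.cast_zero,
      zero_mul, add_zero]
    rw [h]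
    noncomm_ring
  | succ j =>
    have h1 : W.a 0 ^ (j + 1 + 1) * star (W.a 0) ^ (j + 1 + 1)
        = W.a 0 ^ (j + 1) * star (W.a 0) ^ (j + 1 + 1) * W.a 0
          + ((j + 1 + 1 : ℕ) : W.carrier) * (W.a 0 ^ (j + 1) * star (W.a 0) ^ (j + 1)) := by
      calc W.a 0 ^ (j + 1 + 1) * star (W.a 0) ^ (j + 1 + 1)
          = W.a 0 ^ (j + 1) * (W.a 0 * star (W.a 0) ^ (j + 1 + 1)) := by
            rw [pow_succ, mul_assoc]
        _ = _ := by
            rw [weyl_a_spow W (j + 1)]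
            noncomm_ring [nc_cast_comm, nc_cast_left, nc_pow_comm, nc_pow_left]
    have e2 : star (W.a 0) * W.a 0 ^ (j + 1)
        = W.a 0 ^ (j + 1) * star (W.a 0) - ((j + 1 : ℕ) : W.carrier) * W.a 0 ^ j :=
      eq_sub_of_add_eq (weyl_pow_s W j).symm
    have h2 : star (W.a 0) * (W.a 0 ^ (j + 1) * star (W.a 0) ^ (j + 1)) * W.a 0
        = W.a 0 ^ (j + 1) * star (W.a 0) ^ (j + 1 + 1) * W.a 0
          - ((j + 1 : ℕ) : W.carrier) * (W.a 0 ^ j * star (W.a 0) ^ (j + 1) * W.a 0) := by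
      calc star (W.a 0) * (W.a 0 ^ (j + 1) * star (W.a 0) ^ (j + 1)) * W.a 0
          = (star (W.a 0) * W.a 0 ^ (j + 1)) * star (W.a 0) ^ (j + 1) * W.a 0 := by
            noncomm_ring
        _ = _ := by
            rw [e2, pow_succ']
            noncomm_ring [nc_cast_comm, nc_cast_left, nc_pow_comm, nc_pow_left]
    rw [h1, h2, show j + 1 - 1 = j from rfl]
    noncomm_ring [nc_cast_comm, nc_cast_left, nc_pow_comm, nc_pow_left]

end WeylHelpers

/-- In `W₁`, `a^{k+1}(a*)^{k+1} − a*·a^k(a*)^k·a ∈ Σ²`, and moreover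
`a^{k+1}(a*)^{k+1} − a*·a^k(a*)^k·a = (k+1)·a^k(a*)^k + k·a^{k-1}(a*)^k a`. -/
theorem weyl1_sandwich_sos (W : WeylAlgebra 1) (k : ℕ) :
    W.IsSOS (W.a 0 ^ (k + 1) * star (W.a 0) ^ (k + 1) -
      star (W.a 0) * (W.a 0 ^ k * star (W.a 0) ^ k) * W.a 0) ∧
    W.a 0 ^ (k + 1) * star (W.a 0) ^ (k + 1) -
        star (W.a 0) * (W.a 0 ^ k * star (W.a 0) ^ k) * W.a 0 =
      (k + 1) • (W.a 0 ^ k * star (W.a 0) ^ k) +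
        k • (W.a 0 ^ (k - 1) * star (W.a 0) ^ k * W.a 0) := by
  constructor
  · rw [weyl_key W k]
    refine weyl_isSOS_add W (weyl_isSOS_nsmul W ?_ _) ?_
    · simpa [star_pow] using weyl_isSOS_star_mul W (star (W.a 0) ^ k)
    · cases k with
      | zero => simpa using weyl_isSOS_zero W
      | succ j =>
        refine weyl_isSOS_nsmul W ?_ _
        have : W.a 0 ^ (j + 1 - 1) * star (W.a 0) ^ (j + 1) * W.a 0 = weylA W j 1 := by
          simp [weylA]
        rw [this]
        exact weylA_sos W j 1
  · rw [weyl_key W k]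
    simp [nsmul_eq_mul]
end
end

section
/- In the Weyl algebra W_1, let s be any monomial (word in the letters a, a*) of length k. Then a^k (a*)^k − s s* ∈ Σ². -/
open scoped ComplexOrder

noncomputable section

section Weyl1Aux

open Finset

namespace Weyl1Aux

variable (W : WeylAlgebra 1)

/-- The normally ordered monomial `(a*)^m a^m` in `W₁`. -/
def Sp (m : ℕ) : W.carrier := star (W.a 0) ^ m * W.a 0 ^ m

lemma ccr1 : W.a 0 * star (W.a 0) = star (W.a 0) * W.a 0 + 1 := by
  have h := W.ccr 0 0
  rw [if_pos rfl] at h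
  rw [sub_eq_iff_eq_add] at h
  rw [h, add_comm]

lemma a_mul_spow (m : ℕ) :
    W.a 0 * star (W.a 0) ^ (m + 1)
      = star (W.a 0) ^ (m + 1) * W.a 0 + (((m : ℂ) + 1)) • star (W.a 0) ^ m := by
  induction m with
  | zero => simpa using ccr1 W
  | succ m ih =>
    have step : W.a 0 * star (W.a 0) ^ (m + 2)
        = (W.a 0 * star (W.a 0) ^ (m + 1)) * star (W.a 0) := by
      rw [pow_succ, ← mul_assoc]
    rw [step, ih, add_mul, smul_mul_assoc, ← pow_succ, mul_assoc, ccr1 W, mul_add, mul_one,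
      ← mul_assoc, ← pow_succ]
    push_cast
    module

lemma apow_mul_s (m : ℕ) :
    W.a 0 ^ (m + 1) * star (W.a 0)
      = star (W.a 0) * W.a 0 ^ (m + 1) + (((m : ℂ) + 1)) • W.a 0 ^ m := by
  induction m with
  | zero => simp [ccr1 W]
  | succ m ih =>
    have step : W.a 0 ^ (m + 2) * star (W.a 0)
        = W.a 0 * (W.a 0 ^ (m + 1) * star (W.a 0)) := by
      rw [pow_succ', mul_assoc]
    rw [step, ih, mul_add, mul_smul_comm, ← mul_assoc, ccr1 W, add_mul, one_mul,
      mul_assoc, ← pow_succ', ← pow_succ']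
    push_cast
    module

lemma key (m : ℕ) :
    W.a 0 * Sp W m * star (W.a 0)
      = Sp W (m + 1) + (2 * (m : ℂ) + 1) • Sp W m + ((m : ℂ)) ^ 2 • Sp W (m - 1) := by
  cases m with
  | zero =>
    simp [Sp, ccr1 W]
  | succ m =>
    have h1 := a_mul_spow W m
    have h2 := apow_mul_s W m
    have hc := ccr1 W
    set A := W.a 0
    set S := star (W.a 0)
    have t1a : (S ^ (m + 1) * A) * (S * A ^ (m + 1)) = Sp W (m + 2) + Sp W (m + 1) := by
      have : (S ^ (m + 1) * A) * (S * A ^ (m + 1)) = S ^ (m + 1) * (A * S) * A ^ (m + 1) := by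
        rw [mul_assoc, ← mul_assoc A S, ← mul_assoc]
      rw [this, hc, mul_add, mul_one, add_mul, ← mul_assoc, ← pow_succ, mul_assoc, ← pow_succ']
      rfl
    calc W.a 0 * Sp W (m + 1) * star (W.a 0)
        = (A * S ^ (m + 1)) * (A ^ (m + 1) * S) := by
          rw [Sp, ← mul_assoc, ← mul_assoc, mul_assoc (A * S ^ (m+1))]
      _ = (S ^ (m + 1) * A + ((m : ℂ) + 1) • S ^ m) *
            (S * A ^ (m + 1) + ((m : ℂ) + 1) • A ^ m) := by rw [h1, h2]
      _ = (S ^ (m + 1) * A) * (S * A ^ (m + 1))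
            + ((m : ℂ) + 1) • ((S ^ (m + 1) * A) * A ^ m)
            + ((m : ℂ) + 1) • ((S ^ m) * (S * A ^ (m + 1)))
            + (((m : ℂ) + 1) * ((m : ℂ) + 1)) • (S ^ m * A ^ m) := by
          rw [mul_add, add_mul, add_mul, mul_smul_comm, smul_mul_assoc, smul_mul_assoc,
            mul_smul_comm, smul_smul]
          abel
      _ = (Sp W (m + 2) + Sp W (m + 1))
            + ((m : ℂ) + 1) • Sp W (m + 1)
            + ((m : ℂ) + 1) • Sp W (m + 1)
            + (((m : ℂ) + 1) * ((m : ℂ) + 1)) • Sp W m := by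
          rw [t1a, mul_assoc, ← pow_succ', ← mul_assoc, ← pow_succ]
          rfl
      _ = Sp W (m + 1 + 1) + (2 * ((m + 1 : ℕ) : ℂ) + 1) • Sp W (m + 1)
            + ((m + 1 : ℕ) : ℂ) ^ 2 • Sp W (m + 1 - 1) := by
          push_cast
          module


/-- Coefficients of `w w*` in the normally ordered basis `(a*)^m a^m`. -/
def wcoeff : List (Fin 1 ⊕ Fin 1) → ℕ → ℝ
  | [], m => if m = 0 then 1 else 0
  | Sum.inl _ :: u, m =>
      (if m = 0 then 0 else wcoeff u (m - 1)) + (2 * (m : ℝ) + 1) * wcoeff u m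
        + ((m : ℝ) + 1) ^ 2 * wcoeff u (m + 1)
  | Sum.inr _ :: u, m => if m = 0 then 0 else wcoeff u (m - 1)

lemma wcoeff_nonneg (w : List (Fin 1 ⊕ Fin 1)) (m : ℕ) : 0 ≤ wcoeff w m := by
  induction w generalizing m with
  | nil => rw [wcoeff]; positivity
  | cons l u ih =>
    match l with
    | Sum.inl i =>
      rw [wcoeff]
      have h1 : (0:ℝ) ≤ if m = 0 then 0 else wcoeff u (m - 1) := by
        split
        · exact le_refl _
        · exact ih _
      have h2 : (0:ℝ) ≤ (2 * (m : ℝ) + 1) * wcoeff u m := by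
        have := ih m; positivity
      have h3 : (0:ℝ) ≤ ((m : ℝ) + 1) ^ 2 * wcoeff u (m + 1) := by
        have := ih (m + 1); positivity
      linarith
    | Sum.inr i =>
      rw [wcoeff]
      split
      · rfl
      · exact ih _

lemma wcoeff_eq_zero (w : List (Fin 1 ⊕ Fin 1)) (m : ℕ) (h : w.length < m) :
    wcoeff w m = 0 := by
  induction w generalizing m with
  | nil => rw [wcoeff, if_neg (by omega)]
  | cons l u ih =>
    have hm : m ≠ 0 := by simp at h; omega
    have h1 : u.length < m - 1 := by simp at h; omega
    have h2 : u.length < m := by simp at h; omega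
    have h3 : u.length < m + 1 := by simp at h; omega
    match l with
    | Sum.inl i =>
      rw [wcoeff, if_neg hm, ih _ h1, ih _ h2, ih _ h3]
      ring
    | Sum.inr i =>
      rw [wcoeff, if_neg hm, ih _ h1]

lemma wcoeff_le (w : List (Fin 1 ⊕ Fin 1)) (m : ℕ) :
    wcoeff w m ≤ wcoeff (List.replicate w.length (Sum.inl (0 : Fin 1))) m := by
  induction w generalizing m with
  | nil => exact le_refl _
  | cons l u ih =>
    rw [List.length_cons, List.replicate_succ]
    match l with
    | Sum.inl i =>
      rw [wcoeff, wcoeff]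
      have h1 : (if m = 0 then (0:ℝ) else wcoeff u (m - 1))
          ≤ (if m = 0 then 0 else wcoeff (List.replicate u.length (Sum.inl 0)) (m - 1)) := by
        split
        · exact le_refl _
        · exact ih _
      have h2 : (2 * (m : ℝ) + 1) * wcoeff u m
          ≤ (2 * (m : ℝ) + 1) * wcoeff (List.replicate u.length (Sum.inl 0)) m := by
        apply mul_le_mul_of_nonneg_left (ih m) (by positivity)
      have h3 : ((m : ℝ) + 1) ^ 2 * wcoeff u (m + 1)
          ≤ ((m : ℝ) + 1) ^ 2 * wcoeff (List.replicate u.length (Sum.inl 0)) (m + 1) := by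
        apply mul_le_mul_of_nonneg_left (ih (m + 1)) (by positivity)
      linarith
    | Sum.inr i =>
      rw [wcoeff, wcoeff]
      have h2 : (0:ℝ) ≤ (2 * (m : ℝ) + 1)
          * wcoeff (List.replicate u.length (Sum.inl 0)) m := by
        have := wcoeff_nonneg (List.replicate u.length (Sum.inl (0:Fin 1))) m; positivity
      have h3 : (0:ℝ) ≤ ((m : ℝ) + 1) ^ 2
          * wcoeff (List.replicate u.length (Sum.inl 0)) (m + 1) := by
        have := wcoeff_nonneg (List.replicate u.length (Sum.inl (0:Fin 1))) (m + 1); positivity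
      have h1 : (if m = 0 then (0:ℝ) else wcoeff u (m - 1))
          ≤ (if m = 0 then 0 else wcoeff (List.replicate u.length (Sum.inl 0)) (m - 1)) := by
        split
        · exact le_refl _
        · exact ih _
      linarith


lemma wordVal_cons (l : Fin 1 ⊕ Fin 1) (u : List (Fin 1 ⊕ Fin 1)) :
    W.wordVal (l :: u) = W.letterVal l * W.wordVal u := by
  simp [WeylAlgebra.wordVal]

lemma letterVal_inl (i : Fin 1) : W.letterVal (Sum.inl i) = W.a 0 := by
  rw [Fin.eq_zero i]; rfl

lemma letterVal_inr (i : Fin 1) : W.letterVal (Sum.inr i) = star (W.a 0) := by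
  rw [Fin.eq_zero i]; rfl

lemma wordVal_replicate (k : ℕ) :
    W.wordVal (List.replicate k (Sum.inl (0 : Fin 1))) = W.a 0 ^ k := by
  induction k with
  | zero => simp [WeylAlgebra.wordVal]
  | succ k ih =>
    rw [List.replicate_succ, wordVal_cons, ih, letterVal_inl, ← pow_succ']

lemma sandwich_r (m : ℕ) (c : ℂ) :
    star (W.a 0) * (c • Sp W m) * W.a 0 = c • Sp W (m + 1) := by
  rw [mul_smul_comm, smul_mul_assoc]
  congr 1
  rw [Sp, Sp, pow_succ', pow_succ]
  noncomm_ring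

lemma wordVal_mul_star (w : List (Fin 1 ⊕ Fin 1)) :
    W.wordVal w * star (W.wordVal w)
      = ∑ m ∈ range (w.length + 1), ((wcoeff w m : ℝ) : ℂ) • Sp W m := by
  induction w with
  | nil => simp [WeylAlgebra.wordVal, wcoeff, Sp]
  | cons l u ih =>
    match l with
    | Sum.inr i =>
      have hww : W.wordVal (Sum.inr i :: u) * star (W.wordVal (Sum.inr i :: u))
          = star (W.a 0) * (W.wordVal u * star (W.wordVal u)) * W.a 0 := by
        rw [wordVal_cons, letterVal_inr, star_mul, star_star]
        noncomm_ring
      rw [hww, ih, Finset.mul_sum, Finset.sum_mul, List.length_cons]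
      conv_rhs => rw [Finset.sum_range_succ' _ (u.length + 1)]
      have hterm : ∀ m ∈ range (u.length + 1),
          star (W.a 0) * (((wcoeff u m : ℝ) : ℂ) • Sp W m) * W.a 0
            = ((wcoeff (Sum.inr i :: u) (m + 1) : ℝ) : ℂ) • Sp W (m + 1) := by
        intro m _
        rw [sandwich_r]
        congr 2
      rw [Finset.sum_congr rfl hterm]
      have h0 : wcoeff (Sum.inr i :: u) 0 = 0 := by simp [wcoeff]
      rw [h0]
      simp
    | Sum.inl i =>
      have hww : W.wordVal (Sum.inl i :: u) * star (W.wordVal (Sum.inl i :: u))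
          = W.a 0 * (W.wordVal u * star (W.wordVal u)) * star (W.a 0) := by
        rw [wordVal_cons, letterVal_inl, star_mul]
        noncomm_ring
      rw [hww, ih, Finset.mul_sum, Finset.sum_mul, List.length_cons]
      have hterm : ∀ m ∈ range (u.length + 1),
          W.a 0 * (((wcoeff u m : ℝ) : ℂ) • Sp W m) * star (W.a 0)
            = ((wcoeff u m : ℝ) : ℂ) • Sp W (m + 1)
              + (((2 * (m : ℝ) + 1) * wcoeff u m : ℝ) : ℂ) • Sp W m
              + ((((m : ℝ)) ^ 2 * wcoeff u m : ℝ) : ℂ) • Sp W (m - 1) := by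
        intro m _
        rw [mul_smul_comm, smul_mul_assoc, key W m]
        push_cast
        module
      rw [Finset.sum_congr rfl hterm, Finset.sum_add_distrib, Finset.sum_add_distrib]
      have hsplit : ∀ m ∈ range (u.length + 1 + 1),
          ((wcoeff (Sum.inl i :: u) m : ℝ) : ℂ) • Sp W m
            = (((if m = 0 then (0 : ℝ) else wcoeff u (m - 1)) : ℝ) : ℂ) • Sp W m
              + (((2 * (m : ℝ) + 1) * wcoeff u m : ℝ) : ℂ) • Sp W m
              + ((((m : ℝ) + 1) ^ 2 * wcoeff u (m + 1) : ℝ) : ℂ) • Sp W m := by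
        intro m _
        rw [wcoeff]
        push_cast
        module
      rw [Finset.sum_congr rfl hsplit, Finset.sum_add_distrib, Finset.sum_add_distrib]
      have hz1 : wcoeff u (u.length + 1) = 0 := wcoeff_eq_zero _ _ (by omega)
      have hz2 : wcoeff u (u.length + 1 + 1) = 0 := wcoeff_eq_zero _ _ (by omega)
      congr 1
      congr 1
      · -- shift sum
        conv_rhs => rw [Finset.sum_range_succ' _ (u.length + 1)]
        simp
      · -- diagonal sum
        conv_rhs => rw [Finset.sum_range_succ]
        rw [hz1]
        simp
      · -- down-shift sum
        conv_lhs => rw [Finset.sum_range_succ' _ u.length]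
        conv_rhs => rw [Finset.sum_range_succ, Finset.sum_range_succ]
        rw [hz1, hz2]
        simp

end Weyl1Aux

end Weyl1Aux

/-- In `W₁`, for any monomial `s` (word `w` in the letters `a, a*`)
of length `k`, `a^k (a*)^k − s s* ∈ Σ²`. -/
theorem weyl1_antinormal_dominates (W : WeylAlgebra 1)
    (w : List (Fin 1 ⊕ Fin 1)) (k : ℕ) (hk : w.length = k) :
    W.IsSOS (W.a 0 ^ k * star (W.a 0) ^ k - W.wordVal w * star (W.wordVal w)) := by
  subst hk
  classical
  set k := w.length with hk
  -- the difference coefficients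
  set d : ℕ → ℝ := fun m =>
    Weyl1Aux.wcoeff (List.replicate k (Sum.inl (0 : Fin 1))) m - Weyl1Aux.wcoeff w m
    with hd
  have hdnn : ∀ m, 0 ≤ d m := by
    intro m
    have := Weyl1Aux.wcoeff_le w m
    rw [hd]
    simp only [← hk]
    linarith
  have hrep : W.a 0 ^ k * star (W.a 0) ^ k
      = ∑ m ∈ Finset.range (k + 1),
          ((Weyl1Aux.wcoeff (List.replicate k (Sum.inl (0 : Fin 1))) m : ℝ) : ℂ)
            • Weyl1Aux.Sp W m := by
    have h := Weyl1Aux.wordVal_mul_star W (List.replicate k (Sum.inl (0 : Fin 1)))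
    rw [Weyl1Aux.wordVal_replicate, List.length_replicate, star_pow] at h
    exact h
  have hdiff : W.a 0 ^ k * star (W.a 0) ^ k - W.wordVal w * star (W.wordVal w)
      = ∑ m ∈ Finset.range (k + 1), ((d m : ℝ) : ℂ) • Weyl1Aux.Sp W m := by
    rw [hrep, Weyl1Aux.wordVal_mul_star W w, ← hk, ← Finset.sum_sub_distrib]
    refine Finset.sum_congr rfl fun m _ => ?_
    rw [hd]
    push_cast
    rw [sub_smul]
  refine ⟨k + 1, fun i => ((Real.sqrt (d i) : ℝ) : ℂ) • W.a 0 ^ (i : ℕ), ?_⟩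
  rw [hdiff, ← Fin.sum_univ_eq_sum_range
    (fun m => ((d m : ℝ) : ℂ) • Weyl1Aux.Sp W m) (k + 1)]
  refine Finset.sum_congr rfl fun i _ => ?_
  rw [star_smul, star_pow]
  rw [smul_mul_assoc, mul_smul_comm, smul_smul]
  have hz : star ((Real.sqrt (d i) : ℝ) : ℂ) = ((Real.sqrt (d i) : ℝ) : ℂ) := by
    rw [Complex.star_def, Complex.conj_ofReal]
  rw [hz, ← Complex.ofReal_mul, Real.mul_self_sqrt (hdnn i)]
  rfl
end
end
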